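/- arXiv:1706.08682 — 4 statements merged into one kernel-verified Lean document; each statement's English description precedes it below -/
import Mathlib

section
/- Let 1 ≤ p < q ≤ ∞ with 1/p - 1/q = λ ∈ (0,1), and let (A_k) be a sequence of pairwise disjoint measurable subsets of [0,1] each of positive measure. The operator T defined on L_p[0,1] by Tf = Σ_k (μ(A_k)^{λ-1} ∫_{A_k} f dμ) χ_{A_k} is a bounded linear operator from L_p[0,1] to L_q[0,1] with operator norm equal to 1. -/
open MeasureTheory ENNReal Filter Set

/-- Lebesgue measure on `[0,1]`. -/
noncomputable def μ01 : Measure ℝ := volume.restrict (Set.Icc 0 1)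

instance : Fact (volume (Set.Icc (0:ℝ) 1) < ∞) := ⟨by simp⟩
instance : IsFiniteMeasure μ01 := ⟨by simp [μ01]⟩

namespace Stmt0

noncomputable def coefT (lam : ℝ) (A : ℕ → Set ℝ) (f : ℝ → ℝ) (k : ℕ) : ℝ :=
  (μ01 (A k)).toReal ^ (lam - 1) * ∫ x in A k, f x ∂μ01

noncomputable def Tfun (lam : ℝ) (A : ℕ → Set ℝ) (f : ℝ → ℝ) : ℝ → ℝ :=
  fun t => ∑' k, (A k).indicator (fun _ => coefT lam A f k) t

variable {lam : ℝ} {A : ℕ → Set ℝ}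

lemma coefT_congr {f g : ℝ → ℝ} (h : f =ᵐ[μ01] g) : coefT lam A f = coefT lam A g := by
  funext k
  unfold coefT
  congr 1
  exact integral_congr_ae (ae_restrict_of_ae h)

lemma Tfun_congr {f g : ℝ → ℝ} (h : f =ᵐ[μ01] g) : Tfun lam A f = Tfun lam A g := by
  unfold Tfun; rw [coefT_congr h]

lemma hasSum_Tfun (hAdisj : Pairwise fun i j => Disjoint (A i) (A j)) (f : ℝ → ℝ) (t : ℝ) :
    HasSum (fun k => (A k).indicator (fun _ => coefT lam A f k) t) (Tfun lam A f t) := by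
  apply Summable.hasSum
  by_cases h : ∃ j, t ∈ A j
  · obtain ⟨j, hj⟩ := h
    exact (hasSum_single (f := fun k => (A k).indicator (fun _ => coefT lam A f k) t) j
      (fun k hk => Set.indicator_of_notMem
        (fun ht => Set.disjoint_left.mp (hAdisj hk) ht hj) _)).summable
  · push_neg at h
    have : (fun k => (A k).indicator (fun _ => coefT lam A f k) t) = fun _ => 0 :=
      funext fun k => Set.indicator_of_notMem (h k) _
    rw [this]; exact summable_zero

lemma Tfun_eq_of_mem (hAdisj : Pairwise fun i j => Disjoint (A i) (A j)) (f : ℝ → ℝ)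
    {t : ℝ} {j : ℕ} (hj : t ∈ A j) : Tfun lam A f t = coefT lam A f j := by
  unfold Tfun
  rw [tsum_eq_single j (fun k hk => Set.indicator_of_notMem
    (fun ht => Set.disjoint_left.mp (hAdisj hk) ht hj) _)]
  exact Set.indicator_of_mem hj _

lemma Tfun_eq_zero (f : ℝ → ℝ) {t : ℝ} (h : ∀ j, t ∉ A j) : Tfun lam A f t = 0 := by
  unfold Tfun
  have : (fun k => (A k).indicator (fun _ => coefT lam A f k) t) = fun _ => 0 :=
    funext fun k => Set.indicator_of_notMem (h k) _
  rw [this, tsum_zero]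

lemma measurable_Tfun (hAmeas : ∀ k, MeasurableSet (A k))
    (hAdisj : Pairwise fun i j => Disjoint (A i) (A j)) (f : ℝ → ℝ) :
    Measurable (Tfun lam A f) := by
  apply measurable_of_tendsto_metrizable
    (f := fun n t => ∑ k ∈ Finset.range n, (A k).indicator (fun _ => coefT lam A f k) t)
  · exact fun n => Finset.measurable_sum _ fun k _ => measurable_const.indicator (hAmeas k)
  · rw [tendsto_pi_nhds]
    exact fun t => (hasSum_Tfun hAdisj f t).tendsto_sum_nat

lemma Tfun_add (hAdisj : Pairwise fun i j => Disjoint (A i) (A j)) {f g : ℝ → ℝ}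
    (hf : ∀ k, IntegrableOn f (A k) μ01) (hg : ∀ k, IntegrableOn g (A k) μ01) :
    Tfun lam A (f + g) = Tfun lam A f + Tfun lam A g := by
  funext t
  have h3 := (hasSum_Tfun (lam := lam) hAdisj f t).add (hasSum_Tfun (lam := lam) hAdisj g t)
  have he : (fun k => (A k).indicator (fun _ => coefT lam A (f + g) k) t) =
      fun k => (A k).indicator (fun _ => coefT lam A f k) t +
        (A k).indicator (fun _ => coefT lam A g k) t := by
    funext k
    have hc : coefT lam A (f + g) k = coefT lam A f k + coefT lam A g k := by
      unfold coefT
      rw [show (∫ x in A k, (f + g) x ∂μ01) = (∫ x in A k, f x ∂μ01) + ∫ x in A k, g x ∂μ01 from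
        integral_add (hf k) (hg k)]
      ring
    by_cases ht : t ∈ A k <;> simp [ht, hc]
  show Tfun lam A (f + g) t = Tfun lam A f t + Tfun lam A g t
  unfold Tfun
  rw [he]
  exact h3.tsum_eq

lemma Tfun_smul (hAdisj : Pairwise fun i j => Disjoint (A i) (A j)) (c : ℝ) (f : ℝ → ℝ) :
    Tfun lam A (c • f) = c • Tfun lam A f := by
  funext t
  have h3 := (hasSum_Tfun (lam := lam) hAdisj f t).mul_left c
  have he : (fun k => (A k).indicator (fun _ => coefT lam A (c • f) k) t) =
      fun k => c * (A k).indicator (fun _ => coefT lam A f k) t := by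
    funext k
    have hc : coefT lam A (c • f) k = c * coefT lam A f k := by
      unfold coefT
      rw [show (∫ x in A k, (c • f) x ∂μ01) = c • ∫ x in A k, f x ∂μ01 from integral_smul c f]
      simp; ring
    by_cases ht : t ∈ A k <;> simp [ht, hc]
  show Tfun lam A (c • f) t = c * Tfun lam A f t
  unfold Tfun
  rw [he]
  exact h3.tsum_eq


lemma tsum_rpow_le (a : ℕ → ℝ≥0∞) {r : ℝ} (hr : 1 ≤ r) :
    ∑' k, a k ^ r ≤ (∑' k, a k) ^ r := by
  set S := ∑' k, a k with hS
  have hr0 : 0 < r := lt_of_lt_of_le zero_lt_one hr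
  by_cases hS0 : S = 0
  · have : ∀ k, a k = 0 := by
      intro k
      exact le_antisymm (le_trans (ENNReal.le_tsum k) hS0.le) zero_le
    simp [this, ENNReal.zero_rpow_of_pos hr0, hS0]
  by_cases hStop : S = ∞
  · rw [hStop, ENNReal.top_rpow_of_pos hr0]; exact le_top
  have hterm : ∀ k, a k ^ r ≤ S ^ (r - 1) * a k := by
    intro k
    by_cases hk : a k = 0
    · simp [hk, ENNReal.zero_rpow_of_pos hr0]
    have hkS : a k ≤ S := ENNReal.le_tsum k
    have hktop : a k ≠ ∞ := fun h => hStop (top_le_iff.mp (h ▸ hkS))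
    calc a k ^ r = a k ^ (r - 1) * a k ^ (1 : ℝ) := by
          rw [← ENNReal.rpow_add _ _ hk hktop]; ring_nf
      _ ≤ S ^ (r - 1) * a k := by
          rw [ENNReal.rpow_one]
          exact mul_le_mul_left (ENNReal.rpow_le_rpow hkS (by linarith)) _
  calc ∑' k, a k ^ r ≤ ∑' k, S ^ (r - 1) * a k := ENNReal.tsum_le_tsum hterm
    _ = S ^ (r - 1) * S := by rw [ENNReal.tsum_mul_left]
    _ = S ^ (r - 1) * S ^ (1 : ℝ) := by rw [ENNReal.rpow_one]
    _ = S ^ r := by rw [← ENNReal.rpow_add _ _ hS0 hStop]; ring_nf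

lemma coef_bound {p q : ℝ≥0∞} (hp : 1 ≤ p)
    (hlam : lam = (1 / p).toReal - (1 / q).toReal)
    {f : ℝ → ℝ} (hf : AEStronglyMeasurable f μ01) (k : ℕ)
    (hm0 : μ01 (A k) ≠ 0) (hmT : μ01 (A k) ≠ ∞) :
    (‖coefT lam A f k‖₊ : ℝ≥0∞) * (μ01 (A k)) ^ (1 / q).toReal ≤
      eLpNorm f p (μ01.restrict (A k)) := by
  set m := μ01 (A k) with hm
  set N := eLpNorm f p (μ01.restrict (A k)) with hN
  have hc1 : ((‖(m.toReal) ^ (lam - 1)‖₊ : ℝ≥0∞)) = m ^ (lam - 1) := by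
    rw [ENNReal.toReal_rpow]
    rw [← enorm_eq_nnnorm, Real.enorm_eq_ofReal ENNReal.toReal_nonneg, ENNReal.ofReal_toReal]
    simp [ENNReal.rpow_eq_top_iff, hm0, hmT]
  have hI : (‖∫ x in A k, f x ∂μ01‖₊ : ℝ≥0∞) ≤ N * m ^ (1 - 1 / p.toReal) := by
    calc (‖∫ x in A k, f x ∂μ01‖₊ : ℝ≥0∞)
        ≤ ∫⁻ x in A k, ‖f x‖₊ ∂μ01 := enorm_integral_le_lintegral_enorm _
      _ = eLpNorm f 1 (μ01.restrict (A k)) := (eLpNorm_one_eq_lintegral_enorm (f := f) (μ := μ01.restrict (A k))).symm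
      _ ≤ N * (μ01.restrict (A k)) Set.univ ^ (1 / (1:ℝ≥0∞).toReal - 1 / p.toReal) :=
          eLpNorm_le_eLpNorm_mul_rpow_measure_univ hp hf.restrict
      _ = N * m ^ (1 - 1 / p.toReal) := by
          rw [Measure.restrict_apply_univ, ← hm]; norm_num
  have hmm : m ^ (lam - 1) * (m ^ (1 - 1 / p.toReal) * m ^ (1 / q).toReal) = 1 := by
    rw [← ENNReal.rpow_add _ _ hm0 hmT, ← ENNReal.rpow_add _ _ hm0 hmT]
    have he : lam - 1 + (1 - 1 / p.toReal + (1 / q).toReal) = 0 := by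
      rw [hlam]
      simp only [one_div, ENNReal.toReal_inv]
      ring
    rw [he, ENNReal.rpow_zero]
  calc (‖coefT lam A f k‖₊ : ℝ≥0∞) * m ^ (1 / q).toReal
      = (m ^ (lam - 1)) * (‖∫ x in A k, f x ∂μ01‖₊ : ℝ≥0∞) * m ^ (1 / q).toReal := by
        rw [coefT, nnnorm_mul, ENNReal.coe_mul, hc1]
    _ ≤ (m ^ (lam - 1)) * (N * m ^ (1 - 1 / p.toReal)) * m ^ (1 / q).toReal := by
        gcongr
    _ = N * (m ^ (lam - 1) * (m ^ (1 - 1 / p.toReal) * m ^ (1 / q).toReal)) := by ring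
    _ = N := by rw [hmm, mul_one]


end Stmt0

namespace Stmt0
variable {lam : ℝ} {A : ℕ → Set ℝ}

lemma eLpNorm_Tfun_le {p q : ℝ≥0∞} (hp : 1 ≤ p) (hp0 : p ≠ 0) (hpT : p ≠ ∞) (hpq : p ≤ q)
    (hq0 : q ≠ 0) (hlam : lam = (1 / p).toReal - (1 / q).toReal)
    (hAmeas : ∀ k, MeasurableSet (A k))
    (hAdisj : Pairwise fun i j => Disjoint (A i) (A j))
    (hApos : ∀ k, 0 < μ01 (A k))
    {f : ℝ → ℝ} (hf : AEStronglyMeasurable f μ01) :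
    eLpNorm (Tfun lam A f) q μ01 ≤ eLpNorm f p μ01 := by
  set E := eLpNorm f p μ01 with hE
  have hm0 : ∀ k, μ01 (A k) ≠ 0 := fun k => (hApos k).ne'
  have hmT : ∀ k, μ01 (A k) ≠ ∞ := fun k => measure_ne_top _ _
  have key : ∀ k, (‖coefT lam A f k‖₊ : ℝ≥0∞) * (μ01 (A k)) ^ (1 / q).toReal ≤
      eLpNorm f p (μ01.restrict (A k)) :=
    fun k => coef_bound hp hlam hf k (hm0 k) (hmT k)
  have hrle : ∀ k, eLpNorm f p (μ01.restrict (A k)) ≤ E :=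
    fun k => eLpNorm_mono_measure f Measure.restrict_le_self
  by_cases hqT : q = ∞
  · -- q = ∞
    have hq0' : (1 / q).toReal = 0 := by simp [hqT]
    have hcoef : ∀ k, (‖coefT lam A f k‖₊ : ℝ≥0∞) ≤ E := by
      intro k
      have := key k
      rw [hq0', ENNReal.rpow_zero, mul_one] at this
      exact this.trans (hrle k)
    rw [hqT, eLpNorm_exponent_top, eLpNormEssSup]
    refine essSup_le_of_ae_le _ ?_
    apply ae_of_all
    intro t
    show (‖Tfun lam A f t‖₊ : ℝ≥0∞) ≤ E
    by_cases h : ∃ j, t ∈ A j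
    · obtain ⟨j, hj⟩ := h
      rw [Tfun_eq_of_mem hAdisj f hj]
      exact hcoef j
    · push_neg at h
      rw [Tfun_eq_zero f h]
      simp
  · -- q < ∞
    set pr := p.toReal with hprdef
    set qr := q.toReal with hqrdef
    have hpr : 0 < pr := ENNReal.toReal_pos hp0 hpT
    have hqr : 0 < qr := ENNReal.toReal_pos hq0 hqT
    have hprqr : pr ≤ qr := ENNReal.toReal_mono hqT hpq
    set a : ℕ → ℝ≥0∞ := fun k => ∫⁻ x in A k, (‖f x‖₊ : ℝ≥0∞) ^ pr ∂μ01 with ha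
    have hNk : ∀ k, eLpNorm f p (μ01.restrict (A k)) = (a k) ^ (1 / pr) := fun k =>
      eLpNorm_eq_lintegral_rpow_enorm_toReal hp0 hpT
    have hterm : ∀ k, (‖coefT lam A f k‖₊ : ℝ≥0∞) ^ qr * μ01 (A k) ≤ (a k) ^ (qr / pr) := by
      intro k
      have h1 := ENNReal.rpow_le_rpow ((key k).trans_eq (hNk k)) hqr.le
      rw [ENNReal.mul_rpow_of_nonneg _ _ hqr.le, ← ENNReal.rpow_mul, ← ENNReal.rpow_mul] at h1
      have e1 : (1 / q).toReal * qr = 1 := by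
        simp only [one_div, ENNReal.toReal_inv, hqrdef]
        exact inv_mul_cancel₀ hqr.ne'
      have e2 : 1 / pr * qr = qr / pr := by ring
      rwa [e1, e2, ENNReal.rpow_one] at h1
    have hint : ∫⁻ t, (‖Tfun lam A f t‖₊ : ℝ≥0∞) ^ qr ∂μ01 =
        ∑' k, (‖coefT lam A f k‖₊ : ℝ≥0∞) ^ qr * μ01 (A k) := by
      set U := ⋃ k, A k with hU
      have hUm : MeasurableSet U := MeasurableSet.iUnion hAmeas
      rw [← lintegral_add_compl (fun t => (‖Tfun lam A f t‖₊ : ℝ≥0∞) ^ qr) hUm]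
      have hzero : ∀ t ∈ Uᶜ, (‖Tfun lam A f t‖₊ : ℝ≥0∞) ^ qr = 0 := by
        intro t ht
        have hnt : ∀ j, t ∉ A j := fun j hj => ht (Set.mem_iUnion.mpr ⟨j, hj⟩)
        rw [Tfun_eq_zero f hnt]
        simp [ENNReal.zero_rpow_of_pos hqr]
      have h2 : ∫⁻ t in Uᶜ, (‖Tfun lam A f t‖₊ : ℝ≥0∞) ^ qr ∂μ01 = 0 := by
        rw [setLIntegral_congr_fun hUm.compl hzero]
        simp
      have h1 : ∫⁻ t in U, (‖Tfun lam A f t‖₊ : ℝ≥0∞) ^ qr ∂μ01 =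
          ∑' k, (‖coefT lam A f k‖₊ : ℝ≥0∞) ^ qr * μ01 (A k) := by
        rw [hU, lintegral_iUnion hAmeas hAdisj]
        congr 1
        funext k
        rw [setLIntegral_congr_fun (hAmeas k)
          (fun t ht => by rw [Tfun_eq_of_mem hAdisj f ht]), setLIntegral_const]
      rw [h1, h2, add_zero]
    have hsum : ∑' k, a k ≤ E ^ pr := by
      have h3 : ∑' k, a k = ∫⁻ x in ⋃ k, A k, (‖f x‖₊ : ℝ≥0∞) ^ pr ∂μ01 :=
        (lintegral_iUnion hAmeas hAdisj _).symm
      have h4 : E ^ pr = ∫⁻ x, (‖f x‖₊ : ℝ≥0∞) ^ pr ∂μ01 := by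
        rw [hE, eLpNorm_eq_lintegral_rpow_enorm_toReal hp0 hpT, ← ENNReal.rpow_mul,
          one_div, inv_mul_cancel₀ hpr.ne', ENNReal.rpow_one]; rfl
      rw [h3, h4]
      exact setLIntegral_le_lintegral _ _
    have hr1 : 1 ≤ qr / pr := (one_le_div hpr).mpr hprqr
    calc eLpNorm (Tfun lam A f) q μ01
        = (∫⁻ t, (‖Tfun lam A f t‖₊ : ℝ≥0∞) ^ qr ∂μ01) ^ (1 / qr) :=
          eLpNorm_eq_lintegral_rpow_enorm_toReal hq0 hqT
      _ = (∑' k, (‖coefT lam A f k‖₊ : ℝ≥0∞) ^ qr * μ01 (A k)) ^ (1 / qr) := by rw [hint]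
      _ ≤ (∑' k, (a k) ^ (qr / pr)) ^ (1 / qr) :=
          ENNReal.rpow_le_rpow (ENNReal.tsum_le_tsum hterm) (by positivity)
      _ ≤ ((∑' k, a k) ^ (qr / pr)) ^ (1 / qr) :=
          ENNReal.rpow_le_rpow (tsum_rpow_le a hr1) (by positivity)
      _ ≤ ((E ^ pr) ^ (qr / pr)) ^ (1 / qr) := by
          exact ENNReal.rpow_le_rpow (ENNReal.rpow_le_rpow hsum (by positivity)) (by positivity)
      _ = E := by
          rw [← ENNReal.rpow_mul, ← ENNReal.rpow_mul]
          rw [show pr * (qr / pr * (1 / qr)) = 1 by field_simp, ENNReal.rpow_one]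

end Stmt0

open Stmt0

/-- Let `1 ≤ p < q ≤ ∞` with `λ = 1/p - 1/q ∈ (0,1)` and let `(A k)` be
pairwise disjoint measurable subsets of `[0,1]` of positive measure. The operator
`T f = ∑ k (μ(A k))^(λ-1) (∫_{A k} f dμ) χ_{A k}` is a bounded linear operator from
`L_p[0,1]` to `L_q[0,1]` with operator norm equal to `1`. -/
theorem statement0 (p q : ℝ≥0∞) [Fact (1 ≤ p)] [Fact (1 ≤ q)] (hp : 1 ≤ p) (hpq : p < q)
    (lam : ℝ) (hlam : lam = (1 / p).toReal - (1 / q).toReal)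
    (hlam0 : 0 < lam) (hlam1 : lam < 1)
    (A : ℕ → Set ℝ) (hAmeas : ∀ k, MeasurableSet (A k))
    (hAsub : ∀ k, A k ⊆ Set.Icc (0:ℝ) 1)
    (hAdisj : Pairwise fun i j => Disjoint (A i) (A j))
    (hApos : ∀ k, 0 < μ01 (A k)) :
    ∃ T : Lp ℝ p μ01 →L[ℝ] Lp ℝ q μ01,
      (∀ f : Lp ℝ p μ01, ∀ᵐ t ∂μ01,
        (T f : ℝ → ℝ) t =
          ∑' k, (μ01 (A k)).toReal ^ (lam - 1) * (∫ x in A k, f x ∂μ01) *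
            (A k).indicator (fun _ => (1:ℝ)) t) ∧
      ‖T‖ = 1 := by
  have hq1 : 1 ≤ q := hp.trans hpq.le
  have hp0 : p ≠ 0 := (one_pos.trans_le hp).ne'
  have hq0 : q ≠ 0 := (one_pos.trans_le hq1).ne'
  have hpT : p ≠ ∞ := by
    intro h
    rw [h] at hlam
    simp only [one_div, ENNReal.inv_top, ENNReal.toReal_zero, zero_sub] at hlam
    have hnn : (0:ℝ) ≤ q⁻¹.toReal := ENNReal.toReal_nonneg
    linarith
  have hmem : ∀ f : Lp ℝ p μ01, MemLp (Tfun lam A ⇑f) q μ01 := fun f =>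
    ⟨(measurable_Tfun hAmeas hAdisj _).aestronglyMeasurable,
     (eLpNorm_Tfun_le hp hp0 hpT hpq.le hq0 hlam hAmeas hAdisj hApos
       (Lp.aestronglyMeasurable f)).trans_lt (Lp.eLpNorm_lt_top f)⟩
  have hIOn : ∀ (f : Lp ℝ p μ01) (k : ℕ), IntegrableOn (⇑f) (A k) μ01 := fun f k =>
    ((Lp.memLp f).integrable hp).integrableOn
  let Tl : Lp ℝ p μ01 →ₗ[ℝ] Lp ℝ q μ01 :=
    { toFun := fun f => (hmem f).toLp _
      map_add' := by
        intro f g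
        rw [← MemLp.toLp_add (hmem f) (hmem g)]
        apply MemLp.toLp_congr
        rw [Tfun_congr (Lp.coeFn_add f g), Tfun_add hAdisj (hIOn f) (hIOn g)]
      map_smul' := by
        intro c f
        simp only [RingHom.id_apply]
        rw [← MemLp.toLp_const_smul c (hmem f)]
        apply MemLp.toLp_congr
        rw [Tfun_congr (Lp.coeFn_smul c f), Tfun_smul hAdisj c ⇑f] }
  have hbound : ∀ f : Lp ℝ p μ01, ‖Tl f‖ ≤ 1 * ‖f‖ := by
    intro f
    rw [one_mul]
    show ‖(hmem f).toLp _‖ ≤ ‖f‖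
    rw [Lp.norm_toLp, Lp.norm_def]
    exact ENNReal.toReal_mono (Lp.eLpNorm_ne_top f)
      (eLpNorm_Tfun_le hp hp0 hpT hpq.le hq0 hlam hAmeas hAdisj hApos (Lp.aestronglyMeasurable f))
  refine ⟨Tl.mkContinuous 1 hbound, ?_, ?_⟩
  · intro f
    have h1 : ⇑(Tl.mkContinuous 1 hbound f) =ᵐ[μ01] Tfun lam A ⇑f := MemLp.coeFn_toLp (hmem f)
    filter_upwards [h1] with t ht
    rw [ht]
    show Tfun lam A ⇑f t = _
    unfold Tfun
    refine tsum_congr fun k => ?_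
    rw [coefT]
    by_cases hk : t ∈ A k <;> simp [hk]
  · refine le_antisymm (Tl.mkContinuous_norm_le zero_le_one hbound) ?_
    set m0 := μ01 (A 0) with hm0def
    have hm00 : m0 ≠ 0 := (hApos 0).ne'
    have hm0T : m0 ≠ ∞ := measure_ne_top _ _
    have hm0pos : 0 < m0.toReal := ENNReal.toReal_pos hm00 hm0T
    set r : ℝ := m0.toReal ^ (-(1 / p.toReal)) with hr
    set f0 : Lp ℝ p μ01 := indicatorConstLp p (hAmeas 0) hm0T r with hf0
    have hnf0 : ‖f0‖ = 1 := by
      rw [hf0, norm_indicatorConstLp hp0 hpT]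
      rw [Real.norm_eq_abs, abs_of_nonneg (Real.rpow_nonneg hm0pos.le _)]
      rw [measureReal_def, ← hm0def, ← Real.rpow_add hm0pos]
      simp
    set s : ℝ := m0.toReal ^ (-(1 / q.toReal)) with hs
    have hT0 : Tfun lam A ⇑f0 = (A 0).indicator (fun _ => s) := by
      rw [Tfun_congr (indicatorConstLp_coeFn (p := p) (c := r))]
      funext t
      have hcoefk : ∀ k, k ≠ 0 → coefT lam A ((A 0).indicator fun _ => r) k = 0 := by
        intro k hk
        unfold coefT
        rw [setIntegral_indicator (hAmeas 0)]
        rw [Set.disjoint_iff_inter_eq_empty.mp (hAdisj hk)]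
        simp
      have hcoef0 : coefT lam A ((A 0).indicator fun _ => r) 0 = s := by
        unfold coefT
        rw [setIntegral_indicator (hAmeas 0), Set.inter_self, setIntegral_const]
        rw [smul_eq_mul, measureReal_def, ← hm0def, hr, hs]
        rw [show m0.toReal * m0.toReal ^ (-(1 / p.toReal)) = m0.toReal ^ (1 + -(1 / p.toReal)) by
          rw [Real.rpow_add hm0pos, Real.rpow_one]]
        rw [← Real.rpow_add hm0pos]
        congr 1
        rw [hlam]
        simp only [one_div, ENNReal.toReal_inv]
        ring
      by_cases ht : t ∈ A 0
      · rw [Tfun_eq_of_mem hAdisj _ ht, hcoef0, Set.indicator_of_mem ht]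
      · rw [Set.indicator_of_notMem ht]
        by_cases h : ∃ j, t ∈ A j
        · obtain ⟨j, hj⟩ := h
          have hj0 : j ≠ 0 := fun h => ht (h ▸ hj)
          rw [Tfun_eq_of_mem hAdisj _ hj, hcoefk j hj0]
        · push_neg at h
          exact Tfun_eq_zero _ h
    have hTf0 : Tl.mkContinuous 1 hbound f0 = indicatorConstLp q (hAmeas 0) hm0T s := by
      apply Lp.ext
      refine (MemLp.coeFn_toLp (hmem f0)).trans ?_
      rw [hT0]
      exact (indicatorConstLp_coeFn (p := q)).symm
    have hnTf0 : ‖Tl.mkContinuous 1 hbound f0‖ = 1 := by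
      rw [hTf0, norm_indicatorConstLp' hq0 hm00]
      rw [hs, Real.norm_eq_abs, abs_of_nonneg (Real.rpow_nonneg hm0pos.le _), measureReal_def,
        ← hm0def, ← Real.rpow_add hm0pos]
      simp
    have hle := (Tl.mkContinuous 1 hbound).le_opNorm f0
    rw [hnTf0, hnf0, mul_one] at hle
    exact hle
end

section
/- Let E be a 2n-dimensional subspace of a C(K)-space (e.g. L_∞). Then there exist vectors x_1, …, x_n ∈ E with 1/2 ≤ ‖x_k‖_∞ ≤ 1 for all k and ‖Σ_{k=1}^n a_k x_k‖_∞ ≤ (Σ_{k=1}^n a_k²)^{1/2} for all real scalars a_1, …, a_n. Consequently sup{ (Σ_{k=1}^n |x*(x_k)|²)^{1/2} : x* ∈ (L_∞)*, ‖x*‖ = 1 } ≤ 1. -/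
open Finset Module

noncomputable section

namespace DR9

open RealInnerProductSpace

variable {X : Type*} [NormedAddCommGroup X] [NormedSpace ℝ X]

local notation "Euc" N => EuclideanSpace ℝ (Fin N)

/-- determinant functional on operators `Euc N → X`, relative to an identification `e`. -/
def df {N : ℕ} (e : X ≃L[ℝ] Euc N) (u : (Euc N) →L[ℝ] X) : ℝ :=
  |LinearMap.det ((e : X →ₗ[ℝ] Euc N) ∘ₗ (u : (Euc N) →ₗ[ℝ] X))|

lemma continuous_df {N : ℕ} (e : X ≃L[ℝ] Euc N) : Continuous (df e) := by
  classical
  set b := (EuclideanSpace.basisFun (Fin N) ℝ).toBasis with hb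
  have h1 : ∀ u : (Euc N) →L[ℝ] X, df e u =
      |Matrix.det (LinearMap.toMatrix b b ((e : X →ₗ[ℝ] Euc N) ∘ₗ (u : (Euc N) →ₗ[ℝ] X)))| := by
    intro u; rw [df, LinearMap.det_toMatrix]
  rw [show df e = fun u : (Euc N) →L[ℝ] X => |Matrix.det (LinearMap.toMatrix b b ((e : X →ₗ[ℝ] Euc N) ∘ₗ (u : (Euc N) →ₗ[ℝ] X)))| from funext h1]
  apply Continuous.abs
  apply Continuous.matrix_det
  apply continuous_matrix
  intro i j
  have : ∀ u : (Euc N) →L[ℝ] X,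
      (LinearMap.toMatrix b b ((e : X →ₗ[ℝ] Euc N) ∘ₗ (u : (Euc N) →ₗ[ℝ] X))) i j
        = (b.coord i).toContinuousLinearMap (e (u (b j))) := by
    intro u; simp [LinearMap.toMatrix_apply, Basis.coord_apply]
  simp only [this]
  exact ((b.coord i).toContinuousLinearMap.continuous.comp e.continuous).comp
    (ContinuousLinearMap.apply ℝ X (b j)).continuous

lemma exists_max {N : ℕ} [FiniteDimensional ℝ X] (e : X ≃L[ℝ] Euc N) :
    ∃ u : (Euc N) →L[ℝ] X, ‖u‖ ≤ 1 ∧ 0 < df e u ∧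
      ∀ v : (Euc N) →L[ℝ] X, ‖v‖ ≤ 1 → df e v ≤ df e u := by
  set es : (Euc N) →L[ℝ] X := (e.symm : (Euc N) →L[ℝ] X) with hes
  set c : ℝ := (‖es‖ + 1)⁻¹ with hc
  have hnes : (0:ℝ) < ‖es‖ + 1 := by positivity
  have hcpos : 0 < c := by positivity
  have hC : IsCompact (Metric.closedBall (0 : (Euc N) →L[ℝ] X) 1) := isCompact_closedBall _ _
  obtain ⟨u, hu, hmax⟩ := hC.exists_isMaxOn ⟨0, Metric.mem_closedBall_self zero_le_one⟩
    ((continuous_df e).continuousOn)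
  have hu1 : ‖u‖ ≤ 1 := by simpa [dist_eq_norm] using Metric.mem_closedBall.mp hu
  have hmax' : ∀ v : (Euc N) →L[ℝ] X, ‖v‖ ≤ 1 → df e v ≤ df e u := by
    intro v hv
    exact hmax (by simpa [dist_eq_norm] using hv)
  refine ⟨u, hu1, ?_, hmax'⟩
  have hu0 : df e (c • es) ≤ df e u := by
    apply hmax'
    have h1 : ‖c • es‖ = ‖c‖ * ‖es‖ := norm_smul c es
    rw [h1, Real.norm_eq_abs, abs_of_pos hcpos, hc, inv_mul_le_iff₀ hnes]
    linarith [norm_nonneg es]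
  have hdf0 : df e (c • es) = c ^ N := by
    have hcomp : ((e : X →ₗ[ℝ] Euc N) ∘ₗ (((c • es) : (Euc N) →L[ℝ] X) : (Euc N) →ₗ[ℝ] X))
        = c • (LinearMap.id : (Euc N) →ₗ[ℝ] Euc N) := by
      apply LinearMap.ext; intro x
      simp [hes]
    rw [df, hcomp, LinearMap.det_smul, LinearMap.det_id, finrank_euclideanSpace_fin]
    rw [abs_of_pos (by positivity : (0:ℝ) < c ^ N * 1)]
    ring
  have : (0:ℝ) < c ^ N := by positivity
  calc (0:ℝ) < c ^ N := this
  _ = df e (c • es) := hdf0.symm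
  _ ≤ df e u := hu0

lemma det_Dt {N : ℕ} (S : Submodule ℝ (Euc N)) (r s : ℝ) :
    LinearMap.det (((r • (S.subtypeL ∘L Submodule.orthogonalProjectionOnto S)
        + s • ((Sᗮ).subtypeL ∘L Submodule.orthogonalProjectionOnto (Sᗮ))) :
        (Euc N) →L[ℝ] Euc N) : (Euc N) →ₗ[ℝ] Euc N)
      = r ^ (finrank ℝ S) * s ^ (finrank ℝ (Sᗮ : Submodule ℝ (Euc N))) := by
  classical
  have hcompl : IsCompl S Sᗮ := Submodule.isCompl_orthogonal_of_hasOrthogonalProjection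
  set D : (Euc N) →L[ℝ] Euc N := (r • (S.subtypeL ∘L Submodule.orthogonalProjectionOnto S)
        + s • ((Sᗮ).subtypeL ∘L Submodule.orthogonalProjectionOnto (Sᗮ))) with hDdef
  set bS := finBasis ℝ ↥S with hbS
  set bT := finBasis ℝ ↥(Sᗮ : Submodule ℝ (Euc N)) with hbT
  set b := (bS.prod bT).map (Submodule.prodEquivOfIsCompl S Sᗮ hcompl) with hbdef
  set cf : (Fin (finrank ℝ S) ⊕ Fin (finrank ℝ (Sᗮ : Submodule ℝ (Euc N)))) → ℝ :=
    Sum.elim (fun _ => r) (fun _ => s) with hcf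
  have hD : ∀ i, (D : (Euc N) →ₗ[ℝ] Euc N) (b i) = cf i • b i := by
    intro i
    have hb_apply : b i = Submodule.prodEquivOfIsCompl S Sᗮ hcompl ((bS.prod bT) i) := by
      simp [hbdef]
    cases i with
    | inl i =>
      have h1 : b (Sum.inl i) = ((bS i : Euc N)) := by
        rw [hb_apply, Submodule.coe_prodEquivOfIsCompl']
        simp
      have hmem : ((bS i : Euc N)) ∈ S := (bS i).2
      have hP : (Submodule.orthogonalProjectionOnto S ((bS i : Euc N)) : Euc N) = (bS i : Euc N) :=
        (Submodule.starProjection_eq_self_iff (K := _)).mpr hmem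
      have hQ : Submodule.orthogonalProjectionOnto (Sᗮ) ((bS i : Euc N)) = 0 :=
        Submodule.orthogonalProjectionOnto_orthogonal_apply_eq_zero hmem
      simp [h1, hDdef, hcf, hP, hQ]
    | inr i =>
      have h1 : b (Sum.inr i) = ((bT i : Euc N)) := by
        rw [hb_apply, Submodule.coe_prodEquivOfIsCompl']
        simp
      have hmem : ((bT i : Euc N)) ∈ (Sᗮ) := (bT i).2
      have hP : Submodule.orthogonalProjectionOnto S ((bT i : Euc N)) = 0 :=
        Submodule.orthogonalProjectionOnto_apply_of_mem_orthogonal hmem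
      have hQ : (Submodule.orthogonalProjectionOnto (Sᗮ) ((bT i : Euc N)) : Euc N) = (bT i : Euc N) :=
        (Submodule.starProjection_eq_self_iff (K := _)).mpr hmem
      simp [h1, hDdef, hcf, hP, hQ]
  have hM : LinearMap.toMatrix b b (D : (Euc N) →ₗ[ℝ] Euc N) = Matrix.diagonal cf := by
    ext i j
    rw [LinearMap.toMatrix_apply, hD j]
    rw [map_smul]
    rw [b.repr_self]
    by_cases h : i = j
    · subst h; simp [Matrix.diagonal]
    · simp [Matrix.diagonal, h, Finsupp.single_apply, Ne.symm h]
  rw [← LinearMap.det_toMatrix b, hM, Matrix.det_diagonal, Fintype.prod_sum_type]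
  simp [hcf]


set_option maxHeartbeats 2000000 in
lemma contact {N : ℕ} [FiniteDimensional ℝ X] (e : X ≃L[ℝ] Euc N)
    (u : (Euc N) →L[ℝ] X) (hu : ‖u‖ ≤ 1)
    (hmax : ∀ v : (Euc N) →L[ℝ] X, ‖v‖ ≤ 1 → df e v ≤ df e u) (hpos : 0 < df e u)
    (S : Submodule ℝ (Euc N)) {c : ℝ} (hc0 : 0 ≤ c)
    (hc : c * N < (N : ℝ) - finrank ℝ S) :
    ∃ v : Euc N, ‖v‖ = 1 ∧ ‖u v‖ = 1 ∧
      c < ‖(Submodule.orthogonalProjectionOnto Sᗮ v : Euc N)‖ ^ 2 := by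
  by_contra hcon
  push_neg at hcon
  -- notation
  set P : (Euc N) →L[ℝ] Euc N := S.subtypeL ∘L Submodule.orthogonalProjectionOnto S with hPdef
  set Q : (Euc N) →L[ℝ] Euc N := (Sᗮ).subtypeL ∘L Submodule.orthogonalProjectionOnto (Sᗮ) with hQdef
  have hPQ : ∀ w : Euc N, P w + Q w = w := fun w =>
    Submodule.starProjection_add_starProjection_orthogonal (K := S) w
  have hPy : ∀ w : Euc N, ‖w‖ ^ 2 = ‖P w‖ ^ 2 + ‖Q w‖ ^ 2 := fun w =>
    Submodule.norm_sq_eq_add_norm_sq_projection w S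
  have hPP : ∀ w : Euc N, P (P w) = P w := by
    intro w
    have : (Submodule.orthogonalProjectionOnto S (P w) : Euc N) = P w :=
      (Submodule.starProjection_eq_self_iff (K := _)).mpr (Submodule.orthogonalProjectionOnto S w).2
    simpa [hPdef] using this
  have hQQ : ∀ w : Euc N, Q (Q w) = Q w := by
    intro w
    have : (Submodule.orthogonalProjectionOnto (Sᗮ) (Q w) : Euc N) = Q w :=
      (Submodule.starProjection_eq_self_iff (K := _)).mpr (Submodule.orthogonalProjectionOnto (Sᗮ) w).2
    simpa [hQdef] using this
  have hPQ0 : ∀ w : Euc N, P (Q w) = 0 := by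
    intro w
    have : Submodule.orthogonalProjectionOnto S (Q w) = 0 :=
      Submodule.orthogonalProjectionOnto_apply_of_mem_orthogonal
        (Submodule.orthogonalProjectionOnto (Sᗮ) w).2
    simp only [hPdef, ContinuousLinearMap.comp_apply, this, map_zero]
  have hQP0 : ∀ w : Euc N, Q (P w) = 0 := by
    intro w
    have : Submodule.orthogonalProjectionOnto (Sᗮ) (P w) = 0 :=
      Submodule.orthogonalProjectionOnto_orthogonal_apply_eq_zero
        (Submodule.orthogonalProjectionOnto S w).2
    simp only [hQdef, ContinuousLinearMap.comp_apply, this, map_zero]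
  -- numerology
  set d : ℝ := (finrank ℝ S : ℝ) with hd
  have hd0 : 0 ≤ d := by positivity
  have hNpos : (0:ℝ) < N := by
    have h1 := mul_nonneg hc0 (Nat.cast_nonneg (α := ℝ) N)
    have h2 : (0:ℝ) ≤ d := by positivity
    linarith
  set ρ : ℝ := ((N:ℝ) - d) / N with hρ
  have hcρ : c < ρ := by rw [hρ]; rw [lt_div_iff₀ hNpos]; linarith
  have hρ1 : ρ ≤ 1 := by rw [hρ]; rw [div_le_one hNpos]; linarith
  have hρ0 : 0 < ρ := lt_of_le_of_lt hc0 hcρ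
  set c₁ : ℝ := (2*c + ρ)/3 with hc₁
  set c₂ : ℝ := (c + 2*ρ)/3 with hc₂
  have hcc₁ : c < c₁ := by rw [hc₁]; linarith
  have hc₁c₂ : c₁ < c₂ := by rw [hc₁, hc₂]; linarith
  have hc₂ρ : c₂ < ρ := by rw [hc₂]; linarith
  have hc₁0 : 0 < c₁ := by rw [hc₁]; linarith
  have hc₁1 : c₁ < 1 := by rw [hc₁]; linarith
  have hc₂0 : 0 < c₂ := by rw [hc₂]; linarith
  have hc₂1 : c₂ < 1 := by rw [hc₂]; linarith
  set α : ℝ := 1 - c₂ with hα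
  set β : ℝ := c₂ with hβ
  have hα0 : 0 < α := by rw [hα]; linarith
  have hα1 : α ≤ 1 := by rw [hα]; linarith
  have hβ0 : 0 < β := hc₂0
  have hβ1 : β < 1 := hc₂1
  -- the "slack at near-contact directions" constant
  have hε : ∃ ε : ℝ, 0 < ε ∧ ε ≤ 1/2 ∧ ∀ z : Euc N, ‖z‖ = 1 → c₁ ≤ ‖Q z‖ ^ 2 → ‖u z‖ ≤ 1 - ε := by
    set A : Set (Euc N) := {z | ‖z‖ = 1} ∩ {z | c₁ ≤ ‖Q z‖ ^ 2} with hA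
    have hAcl : IsCompact A := by
      apply IsCompact.of_isClosed_subset (isCompact_sphere (0 : Euc N) 1)
      · exact (isClosed_eq continuous_norm continuous_const).inter
          (isClosed_le continuous_const ((Q.continuous.norm).pow 2))
      · intro z hz
        simp only [hA, Set.mem_inter_iff, Set.mem_setOf_eq] at hz
        simp [mem_sphere_iff_norm, hz.1]
    rcases Set.eq_empty_or_nonempty A with hAe | hAne
    · refine ⟨1/2, by norm_num, by norm_num, ?_⟩
      intro z h1 h2
      exact absurd (by simp [hA, Set.mem_inter_iff, Set.mem_setOf_eq, h1, h2] : z ∈ A)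
        (by simp [hAe])
    · obtain ⟨z₀, hz₀A, hz₀max⟩ := hAcl.exists_isMaxOn hAne (u.continuous.norm.continuousOn)
      have hz₀1 : ‖z₀‖ = 1 := hz₀A.1
      have hz₀u : ‖u z₀‖ ≤ 1 := by
        calc ‖u z₀‖ ≤ ‖u‖ * ‖z₀‖ := u.le_opNorm z₀
        _ ≤ 1 := by rw [hz₀1]; simpa using hu
      have hz₀lt : ‖u z₀‖ < 1 := by
        rcases lt_or_eq_of_le hz₀u with h | h
        · exact h
        · exfalso
          have := hcon z₀ hz₀1 h
          have h2 : c₁ ≤ ‖Q z₀‖ ^ 2 := hz₀A.2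
          have hQco : ‖(Submodule.orthogonalProjectionOnto Sᗮ z₀ : Euc N)‖ ^ 2 = ‖Q z₀‖ ^ 2 := by
            simp [hQdef]
          rw [hQco] at this
          linarith
      refine ⟨(1 - ‖u z₀‖)/2, by linarith, by nlinarith only [norm_nonneg (u z₀), hz₀lt], ?_⟩
      intro z h1 h2
      have hzA : z ∈ A := by simp [hA, Set.mem_inter_iff, Set.mem_setOf_eq, h1, h2]
      have := hz₀max hzA
      simp only [Set.mem_setOf_eq] at this
      linarith
  obtain ⟨ε, hε0, hε12, hεb⟩ := hε
  -- choice of t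
  set g : ℝ := (N:ℝ) * (ρ - c₂) with hg
  have hg0 : 0 < g := by rw [hg]; exact mul_pos hNpos (by linarith)
  set δ : ℝ := 2*(c₂ - c₁)/(1 - c₁) with hδ
  have hδ0 : 0 < δ := by rw [hδ]; exact div_pos (by linarith) (by linarith)
  set K : ℝ := c₁*α^2/(1-c₁) + β^2 with hK
  have hK0 : 0 ≤ K := by
    rw [hK]
    have h1 : 0 ≤ c₁*α^2/(1-c₁) := div_nonneg (by positivity) (by linarith)
    nlinarith only [h1, sq_nonneg β]
  set t : ℝ := min (min (g/((N:ℝ)^2+1)) ε) (min (δ/(K+1)) (1/((N:ℝ)+1))) with ht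
  have ht0 : 0 < t := by
    apply lt_min (lt_min (by positivity) hε0) (lt_min (by positivity) (by positivity))
  have ht1 : t ≤ g/((N:ℝ)^2+1) := le_trans (min_le_left _ _) (min_le_left _ _)
  have ht2 : t ≤ ε := le_trans (min_le_left _ _) (min_le_right _ _)
  have ht3 : t ≤ δ/(K+1) := le_trans (min_le_right _ _) (min_le_left _ _)
  have ht4 : t ≤ 1/((N:ℝ)+1) := le_trans (min_le_right _ _) (min_le_right _ _)
  have ht5 : t ≤ 1 := le_trans ht4 (by rw [div_le_one (by positivity)]; linarith)
  have htK : t * K ≤ δ := by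
    calc t * K ≤ (δ/(K+1)) * K := by apply mul_le_mul_of_nonneg_right ht3 hK0
    _ ≤ δ := by rw [div_mul_eq_mul_div, div_le_iff₀ (by linarith)]; nlinarith
  have hβt : β * t < 1 := by nlinarith only [hβ1, ht5, ht0, hβ0]
  have hαt0 : 0 ≤ α*t := by positivity
  have hβt0 : 0 < 1 - β*t := by linarith
  have hαt1 : (1:ℝ) ≤ 1 + α*t := by linarith
  have hαtε : α*t ≤ ε := by nlinarith only [hα1, ht2, ht0]
  -- the perturbation
  set D : (Euc N) →L[ℝ] Euc N := (1 - β*t) • P + (1 + α*t) • Q with hDdef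
  -- pointwise bound
  have hDnorm : ∀ w : Euc N, ‖u (D w)‖ ≤ ‖w‖ := by
    intro w
    set aa : ℝ := ‖P w‖ with haa
    set bb : ℝ := ‖Q w‖ with hbb
    have haa0 : 0 ≤ aa := norm_nonneg _
    have hbb0 : 0 ≤ bb := norm_nonneg _
    have hw2 : ‖w‖^2 = aa^2 + bb^2 := hPy w
    set z : Euc N := D w with hz
    have hzval : z = (1 - β*t) • P w + (1 + α*t) • Q w := by rw [hz, hDdef]; rfl
    have hPz : P z = (1 - β*t) • P w := by
      rw [hzval]; rw [map_add, map_smul, map_smul, hPP, hPQ0]; simp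
    have hQz : Q z = (1 + α*t) • Q w := by
      rw [hzval]; rw [map_add, map_smul, map_smul, hQQ, hQP0]; simp
    have hz2 : ‖z‖^2 = (1-β*t)^2 * aa^2 + (1+α*t)^2 * bb^2 := by
      rw [hPy z, hPz, hQz, norm_smul, norm_smul, Real.norm_eq_abs, Real.norm_eq_abs,
        abs_of_pos hβt0, abs_of_pos (by linarith : (0:ℝ) < 1 + α*t)]
      ring
    by_cases hcase : c₁ * ‖z‖^2 ≤ ‖Q z‖^2
    · -- z is in a near-contact direction, use the ε-slack
      by_cases hz0 : z = 0
      · rw [hz0]; simp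
      · have hzn : 0 < ‖z‖ := norm_pos_iff.mpr hz0
        have hzhat : ‖(‖z‖⁻¹ • z : Euc N)‖ = 1 := by
          rw [norm_smul, Real.norm_eq_abs, abs_of_pos (by positivity)]
          field_simp
        have hQhat : c₁ ≤ ‖Q (‖z‖⁻¹ • z)‖ ^ 2 := by
          have h1 : ‖Q (‖z‖⁻¹ • z)‖ ^ 2 = ‖Q z‖^2 / ‖z‖^2 := by
            rw [map_smul, norm_smul, Real.norm_eq_abs,
              abs_of_pos (by positivity : (0:ℝ) < ‖z‖⁻¹), mul_pow, inv_pow]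
            rw [inv_mul_eq_div]
          rw [h1, le_div_iff₀ (by positivity : (0:ℝ) < ‖z‖^2)]
          exact hcase
        have hslack := hεb _ hzhat hQhat
        have huz : ‖u z‖ ≤ (1-ε) * ‖z‖ := by
          have : u z = ‖z‖ • (u (‖z‖⁻¹ • z)) := by
            rw [← map_smul, smul_smul]
            rw [mul_inv_cancel₀ hzn.ne', one_smul]
          rw [this, norm_smul, Real.norm_eq_abs, abs_of_pos hzn]
          calc ‖z‖ * ‖u (‖z‖⁻¹ • z)‖ ≤ ‖z‖ * (1-ε) := by
                apply mul_le_mul_of_nonneg_left hslack (le_of_lt hzn)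
          _ = (1-ε)*‖z‖ := by ring
        have hzw : ‖z‖ ≤ (1+α*t) * ‖w‖ := by
          have hsq : (1-β*t)^2 ≤ (1+α*t)^2 := by
            have e : (1+α*t)^2 - (1-β*t)^2 = (α*t+β*t)*(2+α*t-β*t) := by ring
            have h2 : (0:ℝ) ≤ (α*t+β*t) := by positivity
            have h3 : (0:ℝ) ≤ 2+α*t-β*t := by linarith
            nlinarith only [e, mul_nonneg h2 h3]
          have h1 : ‖z‖^2 ≤ ((1+α*t) * ‖w‖)^2 := by
            rw [hz2, mul_pow, hw2]
            nlinarith only [mul_le_mul_of_nonneg_right hsq (sq_nonneg aa), sq_nonneg bb]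
          have h2 : (0:ℝ) ≤ (1+α*t)*‖w‖ := by positivity
          nlinarith only [h1, h2, norm_nonneg z]
        have hfac : (1-ε)*(1+α*t) ≤ 1 := by
          nlinarith only [hαtε, hε0, hαt0, mul_nonneg hε0.le hαt0]
        calc ‖u z‖ ≤ (1-ε)*‖z‖ := huz
        _ ≤ (1-ε)*((1+α*t)*‖w‖) := by
            apply mul_le_mul_of_nonneg_left hzw (by linarith)
        _ = ((1-ε)*(1+α*t))*‖w‖ := by ring
        _ ≤ 1*‖w‖ := mul_le_mul_of_nonneg_right hfac (norm_nonneg w)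
        _ = ‖w‖ := one_mul _
    ·
      push_neg at hcase
      have hQzn : ‖Q z‖^2 = (1+α*t)^2 * bb^2 := by
        rw [hQz, norm_smul, Real.norm_eq_abs, abs_of_pos (by linarith : (0:ℝ) < 1 + α*t)]
        ring
      have hb : (1+α*t)^2 * bb^2 * (1 - c₁) ≤ c₁ * aa^2 := by
        rw [hQzn, hz2] at hcase
        have hsq : (1-β*t)^2 ≤ 1 := by
          have h1 : (0:ℝ) ≤ β*t := by positivity
          nlinarith only [h1, hβt, mul_le_mul_of_nonneg_left hβt.le h1]
        nlinarith only [hcase, mul_le_mul_of_nonneg_right hsq (sq_nonneg aa), hc₁0, hc₁1, sq_nonneg aa]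
      have k1 : bb^2 * (1 - c₁) ≤ c₁ * aa^2 := by
        have hsq1 : (1:ℝ) ≤ (1+α*t)^2 := by nlinarith only [hαt0]
        nlinarith only [hb, mul_le_mul_of_nonneg_right hsq1 (mul_nonneg (sq_nonneg bb) (by linarith : (0:ℝ) ≤ 1 - c₁)), hc₁1]
      have k2 : t * (c₁*α^2 + (1-c₁)*β^2) ≤ 2*(c₂ - c₁) := by
        have := htK
        rw [hK, hδ] at this
        rw [mul_comm] at this
        have h1 : (0:ℝ) < 1 - c₁ := by linarith
        calc t * (c₁*α^2 + (1-c₁)*β^2) = (c₁*α^2/(1-c₁) + β^2) * t * (1-c₁) := by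
              field_simp
        _ ≤ (2*(c₂ - c₁)/(1 - c₁)) * (1-c₁) := by
              apply mul_le_mul_of_nonneg_right this (le_of_lt h1)
        _ = 2*(c₂-c₁) := by field_simp
      have hzw2 : ‖z‖^2 ≤ ‖w‖^2 := by
        rw [hz2, hw2]
        have key : bb^2*(2*α*t+α^2*t^2) ≤ aa^2*(2*β*t - β^2*t^2) := by
          have e1 : bb^2*(2*α*t+α^2*t^2)*(1-c₁) ≤ c₁*aa^2*(2*α*t+α^2*t^2) := by
            have hco : (0:ℝ) ≤ 2*α*t+α^2*t^2 := by positivity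
            have hmul := mul_le_mul_of_nonneg_right k1 hco
            linarith only [hmul]
          have e2 : c₁*aa^2*(2*α*t+α^2*t^2) ≤ (1-c₁)*aa^2*(2*β*t - β^2*t^2) := by
            have hbr : c₁*(2*α+α^2*t) ≤ (1-c₁)*(2*β-β^2*t) := by
              have heq : c₁*(2*α+α^2*t) - (1-c₁)*(2*β-β^2*t)
                  = t*(c₁*α^2 + (1-c₁)*β^2) - 2*(c₂-c₁) := by
                rw [hα, hβ]; ring
              linarith only [heq, k2]
            have hmul := mul_le_mul_of_nonneg_left hbr (mul_nonneg (sq_nonneg aa) ht0.le)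
            linarith only [hmul]
          have h1 : (0:ℝ) < 1 - c₁ := by linarith
          nlinarith only [e1, e2, h1]
        linarith only [key]
      have hzw : ‖z‖ ≤ ‖w‖ := by nlinarith only [hzw2, norm_nonneg z, norm_nonneg w]
      calc ‖u z‖ ≤ ‖u‖ * ‖z‖ := u.le_opNorm z
      _ ≤ 1 * ‖z‖ := by apply mul_le_mul_of_nonneg_right hu (norm_nonneg z)
      _ ≤ ‖w‖ := by rw [one_mul]; exact hzw
  -- contradiction with maximality
  have hDop : ‖u ∘L D‖ ≤ 1 := by
    apply ContinuousLinearMap.opNorm_le_bound _ zero_le_one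
    intro w
    rw [one_mul]
    exact hDnorm w
  have hdet : df e (u ∘L D) = df e u * ((1-β*t) ^ finrank ℝ S
      * (1+α*t) ^ finrank ℝ (Sᗮ : Submodule ℝ (Euc N))) := by
    have h1 : ((e : X →ₗ[ℝ] Euc N) ∘ₗ ((u ∘L D : (Euc N) →L[ℝ] X) : (Euc N) →ₗ[ℝ] X))
        = ((e : X →ₗ[ℝ] Euc N) ∘ₗ (u : (Euc N) →ₗ[ℝ] X)) ∘ₗ (D : (Euc N) →ₗ[ℝ] Euc N) := by
      rfl
    rw [df, h1, LinearMap.det_comp, abs_mul, hDdef, det_Dt S (1-β*t) (1+α*t)]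
    rw [df]
    congr 1
    rw [abs_of_pos]
    positivity
  have hgain : 1 < (1-β*t) ^ finrank ℝ S * (1+α*t) ^ finrank ℝ (Sᗮ : Submodule ℝ (Euc N)) := by
    set dS := finrank ℝ S with hdS
    set dT := finrank ℝ (Sᗮ : Submodule ℝ (Euc N)) with hdT
    have hsum : (dS:ℝ) + dT = N := by
      have h := Submodule.finrank_add_finrank_orthogonal S
      rw [finrank_euclideanSpace_fin] at h
      exact_mod_cast congrArg (Nat.cast : ℕ → ℝ) h
    have hdS0 : (0:ℝ) ≤ dS := by positivity
    have hdT0 : (0:ℝ) ≤ dT := by positivity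
    have hdSN : (dS:ℝ) ≤ N := by linarith
    have hdTN : (dT:ℝ) ≤ N := by linarith
    have hdd : d = (dS:ℝ) := rfl
    have hgeq : g = (dT:ℝ)*α - (dS:ℝ)*β := by
      have hT : (dT:ℝ) = (N:ℝ) - dS := by linarith only [hsum]
      have h1 : (N:ℝ)*(((N:ℝ)-(dS:ℝ))/N) = (N:ℝ)-(dS:ℝ) := by
        field_simp
      calc g = (N:ℝ)*(((N:ℝ)-(dS:ℝ))/N) - (N:ℝ)*c₂ := by
            rw [hg, hρ, hdd]; ring
      _ = ((N:ℝ)-(dS:ℝ)) - (N:ℝ)*c₂ := by rw [h1]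
      _ = (dT:ℝ)*α - (dS:ℝ)*β := by rw [hT, hα, hβ]; ring
    have hB : 1 - (dS:ℝ)*β*t ≤ (1-β*t) ^ dS := by
      have := one_add_mul_le_pow (by linarith : (-2:ℝ) ≤ -(β*t)) dS
      calc 1 - (dS:ℝ)*β*t = 1 + (dS:ℝ)*(-(β*t)) := by ring
      _ ≤ (1 + -(β*t))^dS := this
      _ = (1-β*t)^dS := by ring_nf
    have hA : 1 + (dT:ℝ)*α*t ≤ (1+α*t) ^ dT := by
      have := one_add_mul_le_pow (by linarith only [hαt0] : (-2:ℝ) ≤ α*t) dT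
      calc 1 + (dT:ℝ)*α*t = 1 + (dT:ℝ)*(α*t) := by ring
      _ ≤ (1+α*t)^dT := this
    have hBpos : (0:ℝ) < 1 - (dS:ℝ)*β*t := by
      have hb1 : (dS:ℝ)*β ≤ (N:ℝ) := by nlinarith only [hdSN, hβ1, hdS0, hβ0]
      have h1 : (dS:ℝ)*β*t ≤ (N:ℝ)*t := by
        exact mul_le_mul_of_nonneg_right hb1 ht0.le
      have h2 : (N:ℝ)*t ≤ (N:ℝ)/((N:ℝ)+1) := by
        calc (N:ℝ)*t ≤ (N:ℝ)*(1/((N:ℝ)+1)) := by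
              apply mul_le_mul_of_nonneg_left ht4 (le_of_lt hNpos)
        _ = (N:ℝ)/((N:ℝ)+1) := by ring
      have h3 : (N:ℝ)/((N:ℝ)+1) < 1 := by rw [div_lt_one (by linarith)]; linarith
      linarith
    have hprod : (1 - (dS:ℝ)*β*t) * (1 + (dT:ℝ)*α*t) ≤ (1-β*t)^dS * (1+α*t)^dT := by
      apply mul_le_mul hB hA ?_ (by positivity)
      nlinarith only [mul_nonneg (mul_nonneg hdT0 (le_of_lt hα0)) ht0.le]
    have hfinal : 1 < (1 - (dS:ℝ)*β*t) * (1 + (dT:ℝ)*α*t) := by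
      have hexp : (1 - (dS:ℝ)*β*t) * (1 + (dT:ℝ)*α*t)
          = 1 + t*g - t^2*((dS:ℝ)*β*((dT:ℝ)*α)) := by
        rw [hgeq]; ring
      rw [hexp]
      have hb1 : (dS:ℝ)*β ≤ (N:ℝ) := by nlinarith only [hdSN, hβ1, hdS0, hβ0]
      have hb2 : (dT:ℝ)*α ≤ (N:ℝ) := by nlinarith only [hdTN, hα1, hdT0, hα0]
      have h1 : t*((dS:ℝ)*β*((dT:ℝ)*α)) ≤ t*((N:ℝ)^2) := by
        apply mul_le_mul_of_nonneg_left _ (le_of_lt ht0)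
        have := mul_le_mul hb1 hb2 (mul_nonneg hdT0 hα0.le) (by positivity)
        nlinarith only [this]
      have h2 : t*((N:ℝ)^2) ≤ (g/((N:ℝ)^2+1))*(N:ℝ)^2 := by
        apply mul_le_mul_of_nonneg_right ht1 (by positivity)
      have h3 : (g/((N:ℝ)^2+1))*(N:ℝ)^2 < g := by
        rw [div_mul_eq_mul_div, div_lt_iff₀ (by positivity)]
        nlinarith only [hg0]
      have hc1 : t*((dS:ℝ)*β*((dT:ℝ)*α)) < g := by linarith only [h1, h2, h3]
      have hpos2 : 0 < t*(g - t*((dS:ℝ)*β*((dT:ℝ)*α))) :=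
        mul_pos ht0 (by linarith only [hc1])
      have hrw : t*(g - t*((dS:ℝ)*β*((dT:ℝ)*α))) = t*g - t^2*((dS:ℝ)*β*((dT:ℝ)*α)) := by
        ring
      rw [hrw] at hpos2
      linarith only [hpos2]
    linarith only [hprod, hfinal]
  have hlt : df e u < df e (u ∘L D) := by
    rw [hdet]
    nlinarith only [hgain, hpos]
  linarith only [hlt, hmax (u ∘L D) hDop]


lemma orthonormal_fin_cons {N n : ℕ} {w : Fin n → Euc N} (hw : Orthonormal ℝ w)
    {v : Euc N} (hv : ‖v‖ = 1) (hov : ∀ i, ⟪w i, v⟫ = 0) :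
    Orthonormal ℝ (Fin.cons v w : Fin (n+1) → Euc N) := by
  rw [orthonormal_iff_ite]
  intro i j
  refine Fin.cases ?_ ?_ i
  · refine Fin.cases ?_ ?_ j
    · rw [Fin.cons_zero, if_pos rfl, real_inner_self_eq_norm_sq, hv]; norm_num
    · intro j'
      rw [Fin.cons_zero, Fin.cons_succ, real_inner_comm, hov j',
        if_neg (Ne.symm (Fin.succ_ne_zero j'))]
  · intro i'
    refine Fin.cases ?_ ?_ j
    · rw [Fin.cons_succ, Fin.cons_zero, hov i', if_neg (Fin.succ_ne_zero i')]
    · intro j'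
      rw [Fin.cons_succ, Fin.cons_succ, orthonormal_iff_ite.mp hw i' j']
      simp [Fin.succ_inj]

set_option maxHeartbeats 1000000 in
lemma exists_good_w {N n : ℕ} [FiniteDimensional ℝ X] (e : X ≃L[ℝ] Euc N)
    (u : (Euc N) →L[ℝ] X) (hu : ‖u‖ ≤ 1)
    (hmax : ∀ v : (Euc N) →L[ℝ] X, ‖v‖ ≤ 1 → df e v ≤ df e u) (hpos : 0 < df e u)
    (hN : N = 2*n) :
    ∀ m : ℕ, m ≤ n → ∃ w : Fin m → Euc N,
      Orthonormal ℝ w ∧ ∀ k, 1/2 ≤ ‖u (w k)‖ := by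
  intro m
  induction m with
  | zero =>
    intro _
    refine ⟨fun i => i.elim0, ?_, fun k => k.elim0⟩
    rw [orthonormal_iff_ite]
    intro i; exact i.elim0
  | succ m ih =>
    intro hm
    obtain ⟨w, hw, hbound⟩ := ih (by omega)
    set S : Submodule ℝ (Euc N) := Submodule.span ℝ (Set.range w) with hS
    have hrank : finrank ℝ S = m := by
      rw [hS, finrank_span_eq_card hw.linearIndependent, Fintype.card_fin]
    have hcond : (1/2:ℝ) * N < (N:ℝ) - finrank ℝ S := by
      rw [hrank, hN]
      push_cast
      have : (m:ℝ) + 1 ≤ n := by exact_mod_cast hm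
      nlinarith only [this]
    obtain ⟨v, hv1, hv2, hv3⟩ := contact e u hu hmax hpos S (by norm_num) hcond
    set q : Euc N := (Submodule.orthogonalProjectionOnto Sᗮ v : Euc N) with hq
    have hq2 : (1/2:ℝ) < ‖q‖^2 := hv3
    have hqpos : 0 < ‖q‖ := by
      rcases eq_or_lt_of_le (norm_nonneg q) with h | h
      · exfalso; rw [← h] at hq2; norm_num at hq2
      · exact h
    have hqhalf : (1/2:ℝ) ≤ ‖q‖ := by nlinarith only [hq2, hqpos]
    set vec : Euc N := ‖q‖⁻¹ • q with hvec
    have hvec1 : ‖vec‖ = 1 := by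
      rw [hvec, norm_smul, Real.norm_eq_abs, abs_of_pos (by positivity)]
      field_simp
    have hqS : q ∈ Sᗮ := (Submodule.orthogonalProjectionOnto Sᗮ v).2
    have hov : ∀ i, ⟪w i, vec⟫ = 0 := by
      intro i
      have hwi : w i ∈ S := Submodule.subset_span ⟨i, rfl⟩
      have h0 : ⟪w i, q⟫ = 0 := (Submodule.mem_orthogonal S q).mp hqS (w i) hwi
      rw [hvec, inner_smul_right, h0, mul_zero]
    -- lower bound for the new vector
    have hlow : (1/2:ℝ) ≤ ‖u vec‖ := by
      have huv0 : u v ≠ 0 := by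
        intro h
        rw [h, norm_zero] at hv2
        norm_num at hv2
      obtain ⟨f, hf1, hf2⟩ := exists_dual_vector ℝ (u v) (norm_ne_zero_iff.mpr huv0)
      set g : StrongDual ℝ (Euc N) := f.comp u with hg
      have hgnorm : ‖g‖ ≤ 1 := by
        calc ‖g‖ ≤ ‖f‖ * ‖u‖ := ContinuousLinearMap.opNorm_comp_le f u
        _ ≤ 1 := by rw [hf1, one_mul]; exact hu
      have hgv : g v = 1 := by
        rw [hg]; simp only [ContinuousLinearMap.comp_apply]
        rw [hf2, hv2]
        norm_num
      set y : Euc N := (InnerProductSpace.toDual ℝ (Euc N)).symm g with hy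
      have hyapp : ∀ z : Euc N, ⟪y, z⟫ = g z := fun z =>
        InnerProductSpace.toDual_symm_apply
      have hynorm : ‖y‖ ≤ 1 := by
        rw [hy]
        calc ‖(InnerProductSpace.toDual ℝ (Euc N)).symm g‖ = ‖g‖ :=
          LinearIsometryEquiv.norm_map _ g
        _ ≤ 1 := hgnorm
      have hyv : ⟪y, v⟫ = 1 := by rw [hyapp, hgv]
      have hyeq : y = v := by
        have hsub : ‖y - v‖^2 = ‖y‖^2 - 2*⟪y, v⟫ + ‖v‖^2 := norm_sub_sq_real y v
        rw [hyv, hv1] at hsub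
        have h1 : ‖y - v‖^2 ≤ 0 := by nlinarith only [hsub, hynorm, norm_nonneg y]
        have h2 : y - v = 0 := by
          have := sq_nonneg ‖y - v‖
          have h3 : ‖y - v‖^2 = 0 := le_antisymm h1 this
          have h4 : ‖y - v‖ = 0 := by nlinarith only [h3, norm_nonneg (y - v)]
          exact norm_eq_zero.mp h4
        exact sub_eq_zero.mp h2
      have hPvq : ⟪v, q⟫ = ‖q‖^2 := by
        have hdec : (Submodule.orthogonalProjectionOnto S v : Euc N) + q = v :=
          Submodule.starProjection_add_starProjection_orthogonal (K := S) v
        have h0 : ⟪(Submodule.orthogonalProjectionOnto S v : Euc N), q⟫ = 0 :=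
          (Submodule.mem_orthogonal S q).mp hqS _ (Submodule.orthogonalProjectionOnto S v).2
        calc ⟪v, q⟫ = ⟪(Submodule.orthogonalProjectionOnto S v : Euc N) + q, q⟫ := by rw [hdec]
        _ = ⟪(Submodule.orthogonalProjectionOnto S v : Euc N), q⟫ + ⟪q, q⟫ := inner_add_left _ _ _
        _ = ‖q‖^2 := by rw [h0, real_inner_self_eq_norm_sq, zero_add]
      have hgvec : g vec = ‖q‖ := by
        rw [← hyapp, hyeq, hvec, inner_smul_right, hPvq]
        field_simp
      have hfb : g vec ≤ ‖u vec‖ := by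
        have h1 : g vec = f (u vec) := by rw [hg]; rfl
        have h2 : f (u vec) ≤ |f (u vec)| := le_abs_self _
        have h3 : |f (u vec)| ≤ ‖f‖ * ‖u vec‖ := by
          rw [← Real.norm_eq_abs]
          exact f.le_opNorm (u vec)
        rw [h1]
        calc f (u vec) ≤ ‖f‖ * ‖u vec‖ := le_trans h2 h3
        _ = ‖u vec‖ := by rw [hf1, one_mul]
      calc (1/2:ℝ) ≤ ‖q‖ := hqhalf
      _ = g vec := hgvec.symm
      _ ≤ ‖u vec‖ := hfb
    refine ⟨Fin.cons vec w, orthonormal_fin_cons hw hvec1 hov, ?_⟩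
    intro k
    refine Fin.cases ?_ ?_ k
    · rw [Fin.cons_zero]; exact hlow
    · intro i; rw [Fin.cons_succ]; exact hbound i

theorem dr_lemma {n : ℕ} [FiniteDimensional ℝ X] (h2n : finrank ℝ X = 2*n) :
    ∃ x : Fin n → X, (∀ k, 1/2 ≤ ‖x k‖ ∧ ‖x k‖ ≤ 1) ∧
      ∀ a : Fin n → ℝ, ‖∑ k, a k • x k‖ ≤ Real.sqrt (∑ k, (a k)^2) := by
  set N := 2*n with hNdef
  have hdim : finrank ℝ X = finrank ℝ (Euc N) := by
    rw [finrank_euclideanSpace_fin, h2n]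
  have e : X ≃L[ℝ] Euc N :=
    (LinearEquiv.ofFinrankEq X (Euc N) hdim).toContinuousLinearEquiv
  obtain ⟨u, hu, hpos, hmax⟩ := exists_max e
  obtain ⟨w, hw, hbound⟩ := exists_good_w e u hu hmax hpos rfl n le_rfl
  refine ⟨fun k => u (w k), ?_, ?_⟩
  · intro k
    refine ⟨hbound k, ?_⟩
    calc ‖u (w k)‖ ≤ ‖u‖ * ‖w k‖ := u.le_opNorm _
    _ ≤ 1 := by rw [hw.1 k, mul_one]; exact hu
  · intro a
    have h1 : ∑ k, a k • u (w k) = u (∑ k, a k • w k) := by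
      rw [map_sum]
      congr 1
      ext k
      rw [map_smul]
    rw [h1]
    have h2 : ‖∑ k, a k • w k‖^2 = ∑ k, (a k)^2 := by
      rw [← real_inner_self_eq_norm_sq]
      rw [hw.inner_sum a a univ]
      simp [sq]
    have h3 : ‖∑ k, a k • w k‖ = Real.sqrt (∑ k, (a k)^2) := by
      rw [← h2, Real.sqrt_sq (norm_nonneg _)]
    calc ‖u (∑ k, a k • w k)‖ ≤ ‖u‖ * ‖∑ k, a k • w k‖ := u.le_opNorm _
    _ ≤ 1 * ‖∑ k, a k • w k‖ := mul_le_mul_of_nonneg_right hu (norm_nonneg _)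
    _ = Real.sqrt (∑ k, (a k)^2) := by rw [one_mul, h3]

end DR9


end

open Finset in
/-- Let `E` be a `2n`-dimensional subspace of a `C(K)`-space. Then there
are `x 1, …, x n ∈ E` with `1/2 ≤ ‖x k‖ ≤ 1` and `‖∑ a k • x k‖ ≤ (∑ a k ^ 2)^(1/2)` for
all scalars; consequently `(∑ |x*(x k)|²)^(1/2) ≤ 1` for every norm-one functional `x*`. -/
theorem statement9 {K : Type*} [TopologicalSpace K] [CompactSpace K]
    (n : ℕ) (E : Submodule ℝ C(K, ℝ)) (hE : Module.finrank ℝ E = 2 * n) :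
    ∃ x : Fin n → C(K, ℝ),
      (∀ k, x k ∈ E) ∧
      (∀ k, (1:ℝ) / 2 ≤ ‖x k‖ ∧ ‖x k‖ ≤ 1) ∧
      (∀ a : Fin n → ℝ, ‖∑ k, a k • x k‖ ≤ (∑ k, (a k) ^ 2) ^ ((1:ℝ) / 2)) ∧
      (∀ φ : StrongDual ℝ C(K, ℝ), ‖φ‖ = 1 →
        (∑ k, (φ (x k)) ^ 2) ^ ((1:ℝ) / 2) ≤ 1) := by
  classical
  rcases Nat.eq_zero_or_pos n with hn | hn
  · subst hn
    refine ⟨fun k => k.elim0, fun k => k.elim0, fun k => k.elim0, ?_, ?_⟩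
    · intro a
      rw [show (∑ k : Fin 0, (a k)^2) = 0 from by simp]
      rw [Real.zero_rpow (by norm_num : ((1:ℝ)/2) ≠ 0)]
      simp
    · intro φ _
      rw [show (∑ k : Fin 0, (φ ((fun k : Fin 0 => k.elim0) k))^2) = 0 from by simp]
      rw [Real.zero_rpow (by norm_num : ((1:ℝ)/2) ≠ 0)]
      norm_num
  · haveI : FiniteDimensional ℝ ↥E := FiniteDimensional.of_finrank_pos
      (by rw [hE]; omega)
    obtain ⟨y, hy1, hy2⟩ := DR9.dr_lemma (X := ↥E) hE
    set x : Fin n → C(K, ℝ) := fun k => (y k : C(K, ℝ)) with hx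
    have hsum : ∀ a : Fin n → ℝ, ‖∑ k, a k • x k‖ ≤ (∑ k, (a k)^2) ^ ((1:ℝ)/2) := by
      intro a
      have h1 : (∑ k, a k • x k) = ((∑ k, a k • y k : ↥E) : C(K,ℝ)) := by
        rw [hx]
        push_cast
        rfl
      have h2 : ‖((∑ k, a k • y k : ↥E) : C(K,ℝ))‖ = ‖(∑ k, a k • y k : ↥E)‖ := rfl
      rw [h1, h2, ← Real.sqrt_eq_rpow]
      exact hy2 a
    refine ⟨x, fun k => (y k).2, fun k => ⟨hy1 k |>.1, hy1 k |>.2⟩, hsum, ?_⟩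
    intro φ hφ
    set a : Fin n → ℝ := fun k => φ (x k) with ha
    set s : ℝ := ∑ k, (a k)^2 with hs
    have hs0 : (0:ℝ) ≤ s := Finset.sum_nonneg fun k _ => sq_nonneg _
    have h1 : φ (∑ k, a k • x k) = s := by
      rw [map_sum, hs]
      congr 1
      ext k
      rw [map_smul, smul_eq_mul, ha, sq]
    have h2 : s ≤ s ^ ((1:ℝ)/2) := by
      calc s = φ (∑ k, a k • x k) := h1.symm
      _ ≤ |φ (∑ k, a k • x k)| := le_abs_self _
      _ ≤ ‖φ‖ * ‖∑ k, a k • x k‖ := by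
          rw [← Real.norm_eq_abs]
          exact φ.le_opNorm _
      _ = ‖∑ k, a k • x k‖ := by rw [hφ, one_mul]
      _ ≤ s ^ ((1:ℝ)/2) := hsum a
    have hs1 : s ≤ 1 := by
      by_contra hcon
      push_neg at hcon
      have h3 : s ^ ((1:ℝ)/2) < s ^ (1:ℝ) :=
        Real.rpow_lt_rpow_of_exponent_lt hcon (by norm_num)
      rw [Real.rpow_one] at h3
      linarith
    calc s ^ ((1:ℝ)/2) ≤ 1 ^ ((1:ℝ)/2) := Real.rpow_le_rpow hs0 hs1 (by norm_num)
    _ = 1 := Real.one_rpow _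
end

section
/- Let 1 ≤ p < 2 and let (x_n) be a sequence in L_p[0,1] that is equivalent to the unit vector basis of ℓ_2 (so ‖Σ_{k=1}^n x_k‖_p ≈ n^{1/2}), admitting a decomposition x_n = g_n + h_n with |g_n| ∧ |h_n| = 0 and (h_n) pairwise disjoint. If ‖h_n‖_p ≥ K > 0 for all n, then a contradiction follows; hence lim inf ‖h_n‖_p = 0. -/
open MeasureTheory ENNReal Filter Set Finset

lemma half_rpow (p a b : ℝ) (hp : 1 ≤ p) (ha : 0 ≤ a) (hb : 0 ≤ b) :
    ((a + b)/2) ^ p ≤ (a ^ p + b ^ p)/2 := by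
  have h := Real.rpow_arith_mean_le_arith_mean_rpow (Finset.univ : Finset (Fin 2))
    ![1/2, 1/2] ![a, b] (by intro i _; fin_cases i <;> norm_num)
    (by simp [Fin.sum_univ_two]; norm_num) (by intro i _; fin_cases i <;> simpa) hp
  rw [Fin.sum_univ_two, Fin.sum_univ_two] at h
  simp only [Matrix.cons_val_zero, Matrix.cons_val_one, Matrix.head_cons] at h
  calc ((a + b)/2) ^ p = (1/2*a + 1/2*b) ^ p := by ring_nf
    _ ≤ 1/2 * a^p + 1/2 * b^p := h
    _ = (a ^ p + b ^ p)/2 := by ring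

lemma sign_lemma {n : ℕ} (p : ℝ) (hp : 1 ≤ p) (b : Fin n → ℝ) (j : Fin n) :
    (2:ℝ)^n * |b j| ^ p ≤
      ∑ σ : Fin n → Bool, |∑ k, (if σ k then (1:ℝ) else -1) * b k| ^ p := by
  set e : (Fin n → Bool) → Fin n → ℝ := fun σ k => if σ k then (1:ℝ) else -1 with he
  set S : (Fin n → Bool) → ℝ := fun σ => ∑ k, e σ k * b k with hS
  set i : (Fin n → Bool) → (Fin n → Bool) := fun σ => Function.update σ j (!σ j) with hi
  have hinv : Function.Involutive i := by
    intro σ; funext k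
    by_cases hk : k = j
    · subst hk; simp [hi]
    · simp [hi, Function.update_apply, hk]
  have hdiff : ∀ σ, S σ - S (i σ) = 2 * e σ j * b j := by
    intro σ
    rw [hS, ← Finset.sum_sub_distrib]
    rw [Finset.sum_eq_single j]
    · have : e (i σ) j = - e σ j := by
        simp only [he, hi, Function.update_self]
        cases σ j <;> norm_num
      rw [this]; ring
    · intro k _ hk
      have : e (i σ) k = e σ k := by
        simp [he, hi, Function.update_apply, hk]
      rw [this]; ring
    · simp
  have key : ∀ σ, 2 * |b j| ^ p ≤ |S σ| ^ p + |S (i σ)| ^ p := by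
    intro σ
    have h1 : |b j| ≤ (|S σ| + |S (i σ)|)/2 := by
      have h2 : |S σ - S (i σ)| = 2 * |b j| := by
        rw [hdiff σ, abs_mul, abs_mul]
        have : |e σ j| = 1 := by simp only [he]; cases σ j <;> norm_num
        rw [this]; simp [abs_two]
      have h4 : |S σ - S (i σ)| ≤ |S σ| + |S (i σ)| := abs_sub _ _
      linarith
    have h5 : |b j| ^ p ≤ ((|S σ| + |S (i σ)|)/2) ^ p :=
      Real.rpow_le_rpow (abs_nonneg _) h1 (by linarith)
    have h6 := half_rpow p |S σ| |S (i σ)| hp (abs_nonneg _) (abs_nonneg _)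
    linarith
  have hsum : ∑ σ : Fin n → Bool, |S (i σ)| ^ p = ∑ σ : Fin n → Bool, |S σ| ^ p :=
    Fintype.sum_equiv hinv.toPerm _ _ (fun σ => rfl)
  have hle := Finset.sum_le_sum (fun σ (_ : σ ∈ (Finset.univ : Finset (Fin n → Bool))) => key σ)
  rw [Finset.sum_const, Finset.sum_add_distrib, hsum] at hle
  have hcard : (Finset.univ : Finset (Fin n → Bool)).card = 2^n := by
    simp [Finset.card_univ]
  rw [hcard] at hle
  rw [nsmul_eq_mul] at hle
  push_cast at hle
  linarith

lemma pointwise_lemma {n : ℕ} (p : ℝ) (hp : 1 ≤ p) (bv gv hv : Fin n → ℝ)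
    (hsum : ∀ k, bv k = gv k + hv k)
    (hm : ∀ k, min |gv k| |hv k| = 0)
    (hd : ∀ j k : Fin n, j ≠ k → min |hv j| |hv k| = 0) :
    (2:ℝ)^n * ∑ k, |hv k| ^ p ≤
      ∑ σ : Fin n → Bool, |∑ k, (if σ k then (1:ℝ) else -1) * bv k| ^ p := by
  have hp0 : p ≠ 0 := by linarith
  by_cases hz : ∀ k, hv k = 0
  · have : ∑ k, |hv k| ^ p = 0 := by
      apply Finset.sum_eq_zero; intro k _; rw [hz k]; simp [Real.zero_rpow hp0]
    rw [this, mul_zero]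
    exact Finset.sum_nonneg fun σ _ => Real.rpow_nonneg (abs_nonneg _) p
  · push_neg at hz
    obtain ⟨j, hj⟩ := hz
    have hother : ∀ k, k ≠ j → hv k = 0 := by
      intro k hk
      have h0 := hd j k (Ne.symm hk)
      rcases le_total |hv j| |hv k| with hle | hle
      · rw [min_eq_left hle] at h0
        exact absurd (abs_eq_zero.mp h0) hj
      · rw [min_eq_right hle] at h0
        exact abs_eq_zero.mp h0
    have hgj : gv j = 0 := by
      have h0 := hm j
      rcases le_total |gv j| |hv j| with hle | hle
      · rw [min_eq_left hle] at h0; exact abs_eq_zero.mp h0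
      · rw [min_eq_right hle] at h0; exact absurd (abs_eq_zero.mp h0) hj
    have hbj : bv j = hv j := by rw [hsum j, hgj, zero_add]
    have hsum0 : ∑ k, |hv k| ^ p = |hv j| ^ p := by
      apply Finset.sum_eq_single_of_mem j (Finset.mem_univ j)
      intro k _ hk; rw [hother k hk]; simp [Real.zero_rpow hp0]
    rw [hsum0, ← hbj]
    exact sign_lemma p hp bv j

section helpers
variable {p : ℝ}

lemma norm_rpow_helper (hp : 1 ≤ p) (f : Lp ℝ (ENNReal.ofReal p) μ01) :
    ‖f‖ ^ p = ∫ t, |f t| ^ p ∂μ01 := by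
  have hp0 : (0:ℝ) < p := by linarith
  have hq0 : ENNReal.ofReal p ≠ 0 := by simp [ENNReal.ofReal_eq_zero]; linarith
  have hqt : ENNReal.ofReal p ≠ ∞ := ENNReal.ofReal_ne_top
  have htq : (ENNReal.ofReal p).toReal = p := ENNReal.toReal_ofReal hp0.le
  have h := (Lp.memLp f).eLpNorm_eq_integral_rpow_norm hq0 hqt
  rw [Lp.norm_def, h, htq]
  have hint : 0 ≤ ∫ t, ‖f t‖ ^ p ∂μ01 :=
    integral_nonneg fun t => Real.rpow_nonneg (norm_nonneg _) p
  rw [ENNReal.toReal_ofReal (Real.rpow_nonneg hint _)]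
  rw [Real.rpow_inv_rpow hint (by linarith)]
  simp_rw [Real.norm_eq_abs]

lemma integrable_rpow_helper (hp : 1 ≤ p) (f : Lp ℝ (ENNReal.ofReal p) μ01) :
    Integrable (fun t => |f t| ^ p) μ01 := by
  have hq0 : ENNReal.ofReal p ≠ 0 := by simp [ENNReal.ofReal_eq_zero]; linarith
  have h := (Lp.memLp f).integrable_norm_rpow hq0 ENNReal.ofReal_ne_top
  rw [ENNReal.toReal_ofReal (by linarith)] at h
  simpa [Real.norm_eq_abs] using h

lemma coeFn_sum_helper {ι : Type*} (s : Finset ι) (f : ι → Lp ℝ (ENNReal.ofReal p) μ01) :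
    ⇑(∑ i ∈ s, f i) =ᵐ[μ01] fun t => ∑ i ∈ s, f i t := by
  classical
  induction s using Finset.induction_on with
  | empty => simp only [Finset.sum_empty]; exact Lp.coeFn_zero ℝ (ENNReal.ofReal p) μ01
  | insert a s' hnot ih =>
    rw [Finset.sum_insert hnot]
    filter_upwards [Lp.coeFn_add (f a) (∑ i ∈ s', f i), ih] with t h1 h2
    simp only [Finset.sum_insert hnot, h1, Pi.add_apply, h2]

end helpers

/-- Let `1 ≤ p < 2` and let `(x n)` in `L_p[0,1]` be equivalent to the
unit vector basis of `ℓ₂`, with a decomposition `x n = g n + h n`, `|g n| ⊓ |h n| = 0`,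
and `(h n)` pairwise disjoint. If `‖h n‖_p ≥ K > 0` for all `n`, then a contradiction
follows (hence `liminf ‖h n‖_p = 0`). -/
theorem statement14 (p : ℝ) (hp : 1 ≤ p) (hp2 : p < 2) [Fact (1 ≤ ENNReal.ofReal p)]
    (x g h : ℕ → Lp ℝ (ENNReal.ofReal p) μ01)
    (hdecomp : ∀ n, x n = g n + h n)
    (hgh : ∀ n, |g n| ⊓ |h n| = 0)
    (hdisj : Pairwise fun n m => |h n| ⊓ |h m| = 0)
    (c₁ c₂ : ℝ) (hc₁ : 0 < c₁) (hc₂ : 0 < c₂)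
    (hequiv : ∀ (n : ℕ) (a : Fin n → ℝ),
      c₁ * (∑ k, (a k) ^ 2) ^ ((1:ℝ) / 2) ≤ ‖∑ k, a k • x k‖ ∧
      ‖∑ k, a k • x k‖ ≤ c₂ * (∑ k, (a k) ^ 2) ^ ((1:ℝ) / 2))
    (K : ℝ) (hK : 0 < K) (hh : ∀ n, K ≤ ‖h n‖) :
    False := by
  have hp0 : (0:ℝ) < p := by linarith
  -- key inequality for every n
  have key : ∀ n : ℕ, (n:ℝ) * K^p ≤ c₂^p * (n:ℝ)^(p/2) := by
    intro n
    set e : (Fin n → Bool) → Fin n → ℝ := fun σ k => if σ k then (1:ℝ) else -1 with he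
    set S : (Fin n → Bool) → Lp ℝ (ENNReal.ofReal p) μ01 :=
      fun σ => ∑ k, e σ k • x k with hSdef
    -- Step 1: upper bound on each norm
    have hub : ∀ σ, ‖S σ‖ ^ p ≤ c₂^p * (n:ℝ)^(p/2) := by
      intro σ
      have h2 := (hequiv n (e σ)).2
      have hsq : ∑ k, (e σ k)^2 = (n:ℝ) := by
        have : ∀ k : Fin n, (e σ k)^2 = 1 := by
          intro k; simp only [he]; cases σ k <;> norm_num
        simp [this]
      rw [hsq] at h2
      calc ‖S σ‖ ^ p ≤ (c₂ * (n:ℝ)^((1:ℝ)/2)) ^ p :=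
            Real.rpow_le_rpow (norm_nonneg _) h2 hp0.le
        _ = c₂^p * ((n:ℝ)^((1:ℝ)/2))^p :=
            Real.mul_rpow hc₂.le (Real.rpow_nonneg (Nat.cast_nonneg n) _)
        _ = c₂^p * (n:ℝ)^(p/2) := by
            rw [← Real.rpow_mul (Nat.cast_nonneg n), show (1:ℝ)/2*p = p/2 by ring]
    -- Step 2: a.e. facts
    have hae_gh : ∀ᵐ t ∂μ01, ∀ k : Fin n, min |g (k:ℕ) t| |h (k:ℕ) t| = 0 := by
      rw [ae_all_iff]
      intro k
      have h1 := Lp.coeFn_inf |g (k:ℕ)| |h (k:ℕ)|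
      rw [hgh (k:ℕ)] at h1
      filter_upwards [h1, Lp.coeFn_zero ℝ (ENNReal.ofReal p) μ01,
        Lp.coeFn_abs (g (k:ℕ)), Lp.coeFn_abs (h (k:ℕ))] with t e1 e2 e3 e4
      rw [← e3, ← e4]
      have : (⇑|g (k:ℕ)| ⊓ ⇑|h (k:ℕ)|) t = 0 := by rw [← e1]; exact e2
      simpa using this
    have hae_disj : ∀ᵐ t ∂μ01, ∀ j k : Fin n, j ≠ k → min |h (j:ℕ) t| |h (k:ℕ) t| = 0 := by
      rw [ae_all_iff]
      intro j
      rw [ae_all_iff]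
      intro k
      by_cases hjk : j = k
      · simp [hjk]
      · have hd := hdisj (Fin.val_injective.ne hjk)
        have h1 := Lp.coeFn_inf |h (j:ℕ)| |h (k:ℕ)|
        rw [hd] at h1
        filter_upwards [h1, Lp.coeFn_zero ℝ (ENNReal.ofReal p) μ01,
          Lp.coeFn_abs (h (j:ℕ)), Lp.coeFn_abs (h (k:ℕ))] with t e1 e2 e3 e4
        intro _
        rw [← e3, ← e4]
        have : (⇑|h (j:ℕ)| ⊓ ⇑|h (k:ℕ)|) t = 0 := by rw [← e1]; exact e2
        simpa using this
    have hae_dec : ∀ᵐ t ∂μ01, ∀ k : Fin n, x (k:ℕ) t = g (k:ℕ) t + h (k:ℕ) t := by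
      rw [ae_all_iff]
      intro k
      have h1 : ⇑(x (k:ℕ)) =ᵐ[μ01] ⇑(g (k:ℕ) + h (k:ℕ)) := by rw [hdecomp (k:ℕ)]
      filter_upwards [h1, Lp.coeFn_add (g (k:ℕ)) (h (k:ℕ))] with t e1 e2
      rw [e1, e2]; rfl
    have hae_S : ∀ᵐ t ∂μ01, ∀ σ : Fin n → Bool, S σ t = ∑ k, e σ k * x (k:ℕ) t := by
      rw [ae_all_iff]
      intro σ
      have h1 := coeFn_sum_helper (Finset.univ : Finset (Fin n))
        (fun k : Fin n => e σ k • x (k:ℕ))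
      have h2 : ∀ᵐ t ∂μ01, ∀ k : Fin n, (e σ k • x (k:ℕ)) t = e σ k * x (k:ℕ) t := by
        rw [ae_all_iff]
        intro k
        filter_upwards [Lp.coeFn_smul (e σ k) (x (k:ℕ))] with t ht
        rw [ht]; rfl
      filter_upwards [h1, h2] with t h1t h2t
      rw [hSdef]
      simp only
      rw [h1t]
      exact Finset.sum_congr rfl fun k _ => h2t k
    -- Step 3: pointwise inequality a.e.
    have haept : ∀ᵐ t ∂μ01,
        (2:ℝ)^n * ∑ k : Fin n, |h (k:ℕ) t| ^ p ≤ ∑ σ : Fin n → Bool, |S σ t| ^ p := by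
      filter_upwards [hae_gh, hae_disj, hae_dec, hae_S] with t t1 t2 t3 t4
      have hpl := pointwise_lemma p hp (fun k : Fin n => x (k:ℕ) t)
        (fun k : Fin n => g (k:ℕ) t) (fun k : Fin n => h (k:ℕ) t) t3 t1 t2
      calc (2:ℝ)^n * ∑ k : Fin n, |h (k:ℕ) t| ^ p
          ≤ ∑ σ : Fin n → Bool, |∑ k, (if σ k then (1:ℝ) else -1) * x (k:ℕ) t| ^ p := hpl
        _ = ∑ σ : Fin n → Bool, |S σ t| ^ p := by
            refine Finset.sum_congr rfl fun σ _ => ?_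
            rw [t4 σ]
    -- Step 4: integrate
    have hint_h : ∀ k : Fin n, Integrable (fun t => |h (k:ℕ) t| ^ p) μ01 :=
      fun k => integrable_rpow_helper hp (h (k:ℕ))
    have hint1 : Integrable (fun t => (2:ℝ)^n * ∑ k : Fin n, |h (k:ℕ) t| ^ p) μ01 := by
      apply Integrable.const_mul
      exact integrable_finset_sum _ (fun k _ => hint_h k)
    have hint2 : Integrable (fun t => ∑ σ : Fin n → Bool, |S σ t| ^ p) μ01 :=
      integrable_finset_sum _ (fun σ _ => integrable_rpow_helper hp (S σ))
    have hI := integral_mono_ae hint1 hint2 haept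
    have hL : ∫ t, (2:ℝ)^n * ∑ k : Fin n, |h (k:ℕ) t| ^ p ∂μ01
        = (2:ℝ)^n * ∑ k : Fin n, ‖h (k:ℕ)‖ ^ p := by
      rw [integral_const_mul, integral_finset_sum _ (fun k _ => hint_h k)]
      congr 1
      exact Finset.sum_congr rfl fun k _ => (norm_rpow_helper hp (h (k:ℕ))).symm
    have hR : ∫ t, ∑ σ : Fin n → Bool, |S σ t| ^ p ∂μ01
        = ∑ σ : Fin n → Bool, ‖S σ‖ ^ p := by
      rw [integral_finset_sum _ (fun σ _ => integrable_rpow_helper hp (S σ))]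
      exact Finset.sum_congr rfl fun σ _ => (norm_rpow_helper hp (S σ)).symm
    rw [hL, hR] at hI
    have hsum_h : (n:ℝ) * K^p ≤ ∑ k : Fin n, ‖h (k:ℕ)‖ ^ p := by
      calc (n:ℝ) * K^p = ∑ _k : Fin n, K^p := by
            rw [Finset.sum_const, Finset.card_univ, Fintype.card_fin, nsmul_eq_mul]
        _ ≤ ∑ k : Fin n, ‖h (k:ℕ)‖ ^ p :=
            Finset.sum_le_sum fun k _ => Real.rpow_le_rpow hK.le (hh (k:ℕ)) hp0.le
    have hsum_S : ∑ σ : Fin n → Bool, ‖S σ‖ ^ p ≤ (2:ℝ)^n * (c₂^p * (n:ℝ)^(p/2)) := by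
      calc ∑ σ : Fin n → Bool, ‖S σ‖ ^ p ≤ ∑ _σ : Fin n → Bool, c₂^p * (n:ℝ)^(p/2) :=
            Finset.sum_le_sum fun σ _ => hub σ
        _ = (2:ℝ)^n * (c₂^p * (n:ℝ)^(p/2)) := by
            rw [Finset.sum_const, Finset.card_univ, nsmul_eq_mul]
            push_cast
            simp
    have h2n : (0:ℝ) < 2^n := by positivity
    have : (2:ℝ)^n * ((n:ℝ) * K^p) ≤ (2:ℝ)^n * (c₂^p * (n:ℝ)^(p/2)) := by
      calc (2:ℝ)^n * ((n:ℝ) * K^p) ≤ (2:ℝ)^n * ∑ k : Fin n, ‖h (k:ℕ)‖ ^ p := by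
            exact mul_le_mul_of_nonneg_left hsum_h h2n.le
        _ ≤ ∑ σ : Fin n → Bool, ‖S σ‖ ^ p := hI
        _ ≤ (2:ℝ)^n * (c₂^p * (n:ℝ)^(p/2)) := hsum_S
    exact le_of_mul_le_mul_left this h2n
  -- final contradiction
  set q : ℝ := 1 - p/2 with hq
  have hq0 : (0:ℝ) < q := by rw [hq]; linarith
  set C : ℝ := c₂^p / K^p with hC
  have hKp : (0:ℝ) < K^p := Real.rpow_pos_of_pos hK p
  have hC0 : (0:ℝ) < C := div_pos (Real.rpow_pos_of_pos hc₂ p) hKp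
  obtain ⟨N, hN⟩ := exists_nat_gt (C ^ q⁻¹)
  have hCq : (0:ℝ) < C ^ q⁻¹ := Real.rpow_pos_of_pos hC0 _
  have hN0 : (0:ℝ) < N := lt_trans hCq hN
  have hNq : C < (N:ℝ)^q := by
    calc C = (C ^ q⁻¹)^q := (Real.rpow_inv_rpow hC0.le hq0.ne').symm
      _ < (N:ℝ)^q := Real.rpow_lt_rpow hCq.le hN hq0
  have hkey := key N
  have hNsplit : (N:ℝ) = (N:ℝ)^q * (N:ℝ)^(p/2) := by
    rw [← Real.rpow_add hN0]
    rw [hq]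
    norm_num
  have hNp2 : (0:ℝ) < (N:ℝ)^(p/2) := Real.rpow_pos_of_pos hN0 _
  have hfin : (N:ℝ)^q * K^p ≤ c₂^p := by
    have h1 : (N:ℝ)^q * K^p * (N:ℝ)^(p/2) ≤ c₂^p * (N:ℝ)^(p/2) := by
      calc (N:ℝ)^q * K^p * (N:ℝ)^(p/2) = ((N:ℝ)^q * (N:ℝ)^(p/2)) * K^p := by ring
        _ = (N:ℝ) * K^p := by rw [← hNsplit]
        _ ≤ c₂^p * (N:ℝ)^(p/2) := hkey
    exact le_of_mul_le_mul_right h1 hNp2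
  have : (N:ℝ)^q ≤ C := by
    rw [hC, le_div_iff₀ hKp]
    exact hfin
  linarith
end

section
/- Let E be a reflexive Banach lattice and F a Banach lattice satisfying a lower 2-estimate with constant K. Let T: E → F be bounded and suppose (x_n) is a normalized weakly null 1-unconditional basic sequence in E with ‖Tx_n‖_F ≥ δ > 0 such that (Tx_n) is equivalent to a pairwise disjoint sequence in F. If E has type 2 with constant M, then for all scalars (a_k): K·δ·(Σ_{k=1}^m |a_k|²)^{1/2} ≤ ‖Σ_{k=1}^m a_k Tx_{n_k}‖_F ≤ M‖T‖(Σ_{k=1}^m |a_k|²)^{1/2}; hence T is an isomorphism on the closed span of (x_{n_k}), which is isomorphic to ℓ₂. Consequently T is not ℓ₂-singular. -/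
open Filter Finset NormedSpace

section LatticeAux
variable {G : Type*} [NormedAddCommGroup G] [Lattice G] [HasSolidNorm G] [IsOrderedAddMonoid G] [NormedSpace ℝ G]

private lemma aux_inf_add {a b c : G} (ha : 0 ≤ a) (hb : 0 ≤ b) (hc : 0 ≤ c) :
    a ⊓ (b + c) ≤ a ⊓ b + a ⊓ c := by
  rw [← sub_le_iff_le_add', sub_inf]
  refine sup_le ?_ (le_inf ?_ ?_)
  · exact le_trans (sub_nonpos.mpr inf_le_left) (le_inf ha hc)
  · exact le_trans (sub_le_sub_right inf_le_left b) (sub_le_self a hb)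
  · exact sub_le_iff_le_add'.mpr inf_le_right

private lemma aux_disj_nsmul {a b : G} (ha : 0 ≤ a) (hb : 0 ≤ b) (h : a ⊓ b = 0) :
    ∀ n : ℕ, a ⊓ (n • b) = 0 := by
  intro n
  induction n with
  | zero => rw [zero_smul]; exact inf_eq_right.mpr ha
  | succ n ih =>
      refine le_antisymm ?_ (le_inf ha (nsmul_nonneg hb _))
      calc a ⊓ ((n+1) • b) = a ⊓ (n • b + b) := by rw [succ_nsmul]
        _ ≤ a ⊓ (n • b) + a ⊓ b := aux_inf_add ha (nsmul_nonneg hb n) hb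
        _ = 0 := by rw [ih, h, add_zero]

private lemma aux_nonneg_of_nsmul {u : G} {n : ℕ} (hn : n ≠ 0) (h : 0 ≤ n • u) : 0 ≤ u := by
  have hdisj : (n • u⁻) ⊓ (n • u⁺) = 0 := by
    have h1 : u⁺ ⊓ (n • u⁻) = 0 :=
      aux_disj_nsmul (posPart_nonneg u) (negPart_nonneg u) (posPart_inf_negPart_eq_zero u) n
    exact aux_disj_nsmul (nsmul_nonneg (negPart_nonneg u) n) (posPart_nonneg u)
      (by rw [inf_comm]; exact h1) n
  have heq : n • u = n • u⁺ - n • u⁻ := by rw [← smul_sub, posPart_sub_negPart]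
  have hle : n • u⁻ ≤ n • u⁺ := sub_nonneg.mp (heq ▸ h)
  have hz : n • u⁻ = 0 := by rw [← hdisj, inf_eq_left.mpr hle]
  have h1 : u⁻ ≤ n • u⁻ := by
    simpa using nsmul_le_nsmul_left (negPart_nonneg u) (Nat.one_le_iff_ne_zero.mpr hn)
  exact negPart_eq_zero.mp (le_antisymm (hz ▸ h1) (negPart_nonneg u))

private lemma aux_rat_smul_nonneg {w : G} (hw : 0 ≤ w) (q : ℚ) (hq : 0 ≤ q) :
    0 ≤ (q : ℝ) • w := by
  have hden : q.den ≠ 0 := q.den_nz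
  apply aux_nonneg_of_nsmul hden
  have hnum0 : (0:ℤ) ≤ q.num := Rat.num_nonneg.mpr hq
  have key : q.den • ((q:ℝ) • w) = (q.num.toNat) • w := by
    rw [← Nat.cast_smul_eq_nsmul ℝ, ← Nat.cast_smul_eq_nsmul ℝ, smul_smul]
    congr 1
    have hcast : ((q.num.toNat : ℕ) : ℝ) = (q.num : ℝ) := by
      exact_mod_cast congrArg (fun n : ℤ => (n : ℝ)) (Int.toNat_of_nonneg hnum0)
    rw [hcast]
    exact_mod_cast (by rw [mul_comm]; exact_mod_cast Rat.mul_den_eq_num q :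
      ((q.den:ℚ)) * q = (q.num:ℚ))
  rw [key]
  exact nsmul_nonneg hw _

private lemma aux_real_smul_nonneg {w : G} (hw : 0 ≤ w) {t : ℝ} (ht : 0 ≤ t) :
    0 ≤ t • w := by
  have hq : ∀ n : ℕ, ∃ q : ℚ, t < q ∧ (q:ℝ) < t + 1/(n+1) := by
    intro n
    exact exists_rat_btwn (lt_add_of_pos_right t (by positivity))
  choose q hq1 hq2 using hq
  have htend : Tendsto (fun n => ((q n : ℝ))) atTop (nhds t) := by
    apply tendsto_of_tendsto_of_tendsto_of_le_of_le (g := fun _ => t)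
      (h := fun n : ℕ => t + 1/(n+1)) tendsto_const_nhds ?_ (fun n => (hq1 n).le)
      (fun n => (hq2 n).le)
    have : Tendsto (fun n : ℕ => 1/((n:ℝ)+1)) atTop (nhds 0) :=
      tendsto_one_div_add_atTop_nhds_zero_nat
    simpa using tendsto_const_nhds.add this
  have hmem : ∀ n, (q n : ℝ) • w ∈ {x : G | 0 ≤ x} := fun n =>
    aux_rat_smul_nonneg hw (q n) (by exact_mod_cast (ht.trans (hq1 n).le))
  have hT : Tendsto (fun n => ((q n : ℝ)) • w) atTop (nhds (t • w)) :=
    htend.smul tendsto_const_nhds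
  exact isClosed_nonneg.mem_of_tendsto hT (Eventually.of_forall hmem)

private lemma aux_smul_mono {u v : G} (h : u ≤ v) {t : ℝ} (ht : 0 ≤ t) : t • u ≤ t • v := by
  have := aux_real_smul_nonneg (sub_nonneg.mpr h) ht
  rw [smul_sub] at this
  exact sub_nonneg.mp this

private lemma aux_smul_le_smul {t s : ℝ} (h : t ≤ s) {w : G} (hw : 0 ≤ w) : t • w ≤ s • w := by
  have := aux_real_smul_nonneg hw (sub_nonneg.mpr h)
  rw [sub_smul] at this
  exact sub_nonneg.mp this

private lemma aux_abs_smul_le (a c : ℝ) (h : |a| ≤ c) (w : G) : |a • w| ≤ c • |w| := by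
  have key : ∀ b : ℝ, -c ≤ b → b ≤ c → b • w ≤ c • |w| := by
    intro b hb2 hb1
    rcases le_or_gt 0 b with hb | hb
    · exact le_trans (aux_smul_mono (le_abs_self w) hb) (aux_smul_le_smul hb1 (abs_nonneg w))
    · calc b • w = (-b) • (-w) := by rw [neg_smul, smul_neg, neg_neg]
        _ ≤ (-b) • |w| := aux_smul_mono (neg_le_abs w) (by linarith)
        _ ≤ c • |w| := aux_smul_le_smul (by linarith) (abs_nonneg w)
  rw [abs_le] at h
  refine abs_le'.mpr ⟨key a h.1 h.2, ?_⟩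
  rw [← neg_smul]
  exact key (-a) (by linarith [h.2]) (by linarith [h.1])

private lemma aux_disjoint_smul {a b : ℝ} {u v : G} (h : |u| ⊓ |v| = 0) :
    |a • u| ⊓ |b • v| = 0 := by
  set c : ℝ := max |a| |b| + 1 with hc
  have hc0 : 0 < c := by positivity
  have h1 : |a • u| ≤ c • |u| :=
    aux_abs_smul_le a c (by rw [hc]; linarith [le_max_left |a| |b|]) u
  have h2 : |b • v| ≤ c • |v| :=
    aux_abs_smul_le b c (by rw [hc]; linarith [le_max_right |a| |b|]) v
  have hW : (c • |u|) ⊓ (c • |v|) = 0 := by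
    set W := (c • |u|) ⊓ (c • |v|) with hWdef
    have hWn : 0 ≤ W := le_inf (aux_real_smul_nonneg (abs_nonneg u) hc0.le)
      (aux_real_smul_nonneg (abs_nonneg v) hc0.le)
    have h3 : c⁻¹ • W ≤ |u| ⊓ |v| := by
      refine le_inf ?_ ?_
      · have := aux_smul_mono (inf_le_left : W ≤ c • |u|) (inv_nonneg.mpr hc0.le)
        rwa [smul_smul, inv_mul_cancel₀ hc0.ne', one_smul] at this
      · have := aux_smul_mono (inf_le_right : W ≤ c • |v|) (inv_nonneg.mpr hc0.le)
        rwa [smul_smul, inv_mul_cancel₀ hc0.ne', one_smul] at this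
    rw [h] at h3
    have h4 : c⁻¹ • W = 0 := le_antisymm h3
      (aux_real_smul_nonneg hWn (inv_nonneg.mpr hc0.le))
    have := congrArg (fun x => c • x) h4
    simpa [smul_smul, mul_inv_cancel₀ hc0.ne'] using this
  refine le_antisymm ?_ (le_inf (abs_nonneg _) (abs_nonneg _))
  rw [← hW]
  exact inf_le_inf h1 h2

end LatticeAux

/-- Let `E` be a reflexive Banach lattice of type 2 (constant `M`),
`F` a Banach lattice satisfying a lower 2-estimate (constant `K`), `T : E → F` bounded,
and `(x n)` a normalized weakly null 1-unconditional sequence with `‖T x_n‖ ≥ δ > 0` such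
that `(T x_n)` is equivalent to a pairwise disjoint sequence in `F`. Then along a
subsequence one has the two-sided `ℓ₂`-estimate
`c₁ (∑ a_k²)^{1/2} ≤ ‖∑ a_k T x_{n_k}‖ ≤ M ‖T‖ (∑ a_k²)^{1/2}`; hence `T` is bounded
below on a subspace isomorphic to `ℓ₂`, i.e. `T` is not `ℓ₂`-singular. -/
theorem statement17 {E F : Type*}
    [NormedAddCommGroup E] [Lattice E] [HasSolidNorm E] [IsOrderedAddMonoid E] [NormedSpace ℝ E] [CompleteSpace E]
    [NormedAddCommGroup F] [Lattice F] [HasSolidNorm F] [IsOrderedAddMonoid F] [NormedSpace ℝ F] [CompleteSpace F]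
    -- `E` is reflexive
    (hrefl : Function.Surjective (inclusionInDoubleDual ℝ E))
    -- `E` has type 2 with constant `M`
    (M : ℝ) (hM : 0 < M)
    (htype : ∀ (m : ℕ) (y : Fin m → E),
      ((2 : ℝ) ^ m)⁻¹ * ∑ ε : Fin m → Bool, ‖∑ i, (if ε i then (1:ℝ) else -1) • y i‖ ≤
        M * (∑ i, ‖y i‖ ^ 2) ^ ((1:ℝ) / 2))
    -- `F` satisfies a lower 2-estimate with constant `K`
    (K : ℝ) (hK : 0 < K)
    (hlower : ∀ (m : ℕ) (z : Fin m → F), (∀ i j, i ≠ j → |z i| ⊓ |z j| = 0) →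
      K * (∑ i, ‖z i‖ ^ 2) ^ ((1:ℝ) / 2) ≤ ‖∑ i, z i‖)
    (T : E →L[ℝ] F) (x : ℕ → E)
    (hnorm : ∀ n, ‖x n‖ = 1)
    (hweak : ∀ φ : StrongDual ℝ E, Tendsto (fun n => φ (x n)) atTop (nhds 0))
    -- `(x n)` is 1-unconditional
    (huncond : ∀ (m : ℕ) (a ε : Fin m → ℝ), (∀ i, |ε i| = 1) →
      ‖∑ i, (ε i * a i) • x i‖ = ‖∑ i, a i • x i‖)
    (δ : ℝ) (hδ : 0 < δ) (hTx : ∀ n, δ ≤ ‖T (x n)‖)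
    -- `(T x_n)` is equivalent to a pairwise disjoint sequence `(z n)` in `F`
    (z : ℕ → F) (hzdisj : Pairwise fun n m => |z n| ⊓ |z m| = 0)
    (d₁ d₂ : ℝ) (hd₁ : 0 < d₁) (hd₂ : 0 < d₂)
    (hzequiv : ∀ (m : ℕ) (a : Fin m → ℝ),
      d₁ * ‖∑ i, a i • z i‖ ≤ ‖∑ i, a i • T (x i)‖ ∧
      ‖∑ i, a i • T (x i)‖ ≤ d₂ * ‖∑ i, a i • z i‖) :
    (∃ φ : ℕ → ℕ, StrictMono φ ∧ ∃ c₁ : ℝ, 0 < c₁ ∧ ∀ (m : ℕ) (a : Fin m → ℝ),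
      c₁ * (∑ k, (a k) ^ 2) ^ ((1:ℝ) / 2) ≤ ‖∑ k, a k • T (x (φ k))‖ ∧
      ‖∑ k, a k • T (x (φ k))‖ ≤ M * ‖T‖ * (∑ k, (a k) ^ 2) ^ ((1:ℝ) / 2)) ∧
    -- `T` is not `ℓ₂`-singular
    (∃ (e : lp (fun _ : ℕ => ℝ) 2 →L[ℝ] E) (c : ℝ), 0 < c ∧
      (∀ v, c * ‖v‖ ≤ ‖e v‖) ∧ ∀ v, c * ‖v‖ ≤ ‖T (e v)‖) := by
  classical
  set c₁ : ℝ := d₁ * K * (δ / d₂) with hc₁def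
  have hc₁ : 0 < c₁ := by positivity
  -- upper estimate on x
  have hup : ∀ (m : ℕ) (a : Fin m → ℝ),
      ‖∑ i, a i • x i‖ ≤ M * Real.sqrt (∑ i, (a i)^2) := by
    intro m a
    have h1 := htype m (fun i => a i • x i)
    have h2 : ∀ ε : Fin m → Bool,
        ‖∑ i, (if ε i then (1:ℝ) else -1) • (a i • x i)‖ = ‖∑ i, a i • x i‖ := by
      intro ε
      have hs : ∀ i, (if ε i then (1:ℝ) else -1) • (a i • x i) =
          ((if ε i then (1:ℝ) else -1) * a i) • x i := fun i => (smul_smul _ _ _)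
      rw [Finset.sum_congr rfl (fun i _ => hs i)]
      exact huncond m a (fun i => if ε i then (1:ℝ) else -1)
        (fun i => by by_cases h : ε i <;> simp [h])
    have hsum : ∑ ε : Fin m → Bool, ‖∑ i, (if ε i then (1:ℝ) else -1) • (a i • x i)‖ =
        (2:ℝ)^m * ‖∑ i, a i • x i‖ := by
      rw [Finset.sum_congr rfl (fun ε _ => h2 ε), Finset.sum_const]
      simp [Finset.card_univ, mul_comm]
    rw [hsum, inv_mul_cancel_left₀ (by positivity : ((2:ℝ)^m) ≠ 0)] at h1
    have hterm : ∀ i : Fin m, ‖a i • x i‖ ^ 2 = (a i)^2 := by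
      intro i
      rw [norm_smul, hnorm, mul_one, Real.norm_eq_abs, sq_abs]
    rw [Finset.sum_congr rfl (fun i _ => hterm i), ← Real.sqrt_eq_rpow] at h1
    exact h1
  -- lower bound on ‖z n‖
  have hz_lb : ∀ n, δ / d₂ ≤ ‖z n‖ := by
    intro n
    have h := (hzequiv (n+1) (fun i => if (i:ℕ) = n then 1 else 0)).2
    have hTsum : ∀ (f : ℕ → F),
        ∑ i : Fin (n+1), (if (i:ℕ) = n then (1:ℝ) else 0) • f i = f n := by
      intro f
      rw [Fin.sum_univ_eq_sum_range (fun k => (if k = n then (1:ℝ) else 0) • f k) (n+1)]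
      simp only [ite_smul, one_smul, zero_smul]
      rw [Finset.sum_ite_eq' (Finset.range (n+1)) n f]
      simp
    rw [hTsum (fun k => T (x k)), hTsum z] at h
    rw [div_le_iff₀ hd₂]
    calc δ ≤ ‖T (x n)‖ := hTx n
      _ ≤ d₂ * ‖z n‖ := h
      _ = ‖z n‖ * d₂ := mul_comm _ _
  -- lower estimate
  have hlow : ∀ (m : ℕ) (a : Fin m → ℝ),
      c₁ * Real.sqrt (∑ i, (a i)^2) ≤ ‖∑ i, a i • T (x i)‖ := by
    intro m a
    have hd := (hzequiv m a).1
    have hdisj : ∀ i j : Fin m, i ≠ j → |a i • z i| ⊓ |a j • z j| = 0 := by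
      intro i j hij
      exact aux_disjoint_smul (hzdisj (fun h => hij (Fin.ext h)))
    have h2 := hlower m (fun i => a i • z i) hdisj
    rw [← Real.sqrt_eq_rpow] at h2
    have h3 : (δ/d₂)^2 * (∑ i, (a i)^2) ≤ ∑ i, ‖a i • z i‖^2 := by
      rw [Finset.mul_sum]
      apply Finset.sum_le_sum
      intro i _
      rw [norm_smul, mul_pow, Real.norm_eq_abs, sq_abs, mul_comm ((δ/d₂)^2)]
      have : (δ/d₂)^2 ≤ ‖z i‖^2 := by
        apply pow_le_pow_left₀ (by positivity) (hz_lb i)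
      exact mul_le_mul_of_nonneg_left this (sq_nonneg _)
    calc c₁ * Real.sqrt (∑ i, (a i)^2)
        = d₁ * (K * Real.sqrt ((δ/d₂)^2 * (∑ i, (a i)^2))) := by
          rw [Real.sqrt_mul (by positivity), Real.sqrt_sq (by positivity)]
          rw [hc₁def]; ring
      _ ≤ d₁ * (K * Real.sqrt (∑ i, ‖a i • z i‖^2)) := by
          gcongr
      _ ≤ d₁ * ‖∑ i, a i • z i‖ := by
          gcongr
      _ ≤ ‖∑ i, a i • T (x i)‖ := hd
  -- upper estimate combined with T
  have hupT : ∀ (m : ℕ) (a : Fin m → ℝ),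
      ‖∑ i, a i • T (x i)‖ ≤ M * ‖T‖ * Real.sqrt (∑ i, (a i)^2) := by
    intro m a
    have h1 : ∑ i, a i • T (x i) = T (∑ i, a i • x i) := by
      rw [map_sum]
      exact Finset.sum_congr rfl (fun i _ => (T.map_smul _ _).symm)
    rw [h1]
    calc ‖T (∑ i, a i • x i)‖ ≤ ‖T‖ * ‖∑ i, a i • x i‖ := T.le_opNorm _
      _ ≤ ‖T‖ * (M * Real.sqrt (∑ i, (a i)^2)) := by
          apply mul_le_mul_of_nonneg_left (hup m a) (norm_nonneg T)
      _ = M * ‖T‖ * Real.sqrt (∑ i, (a i)^2) := by ring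
  -- finset versions
  have hsum_transfer : ∀ (s : Finset ℕ) (m : ℕ), s ⊆ Finset.range m → ∀ (a : ℕ → ℝ)
      (f : ℕ → F), (∑ i : Fin m, (if (i:ℕ) ∈ s then a i else 0) • f i) = ∑ n ∈ s, a n • f n := by
    intro s m hsub a f
    rw [Fin.sum_univ_eq_sum_range (fun k => (if k ∈ s then a k else 0) • f k) m]
    simp only [ite_smul, zero_smul]
    rw [Finset.sum_ite_mem, Finset.inter_eq_right.mpr hsub]
  have hsq_transfer : ∀ (s : Finset ℕ) (m : ℕ), s ⊆ Finset.range m → ∀ (a : ℕ → ℝ),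
      (∑ i : Fin m, ((if (i:ℕ) ∈ s then a i else 0))^2) = ∑ n ∈ s, (a n)^2 := by
    intro s m hsub a
    rw [Fin.sum_univ_eq_sum_range (fun k => ((if k ∈ s then a k else 0))^2) m]
    have : ∀ k, ((if k ∈ s then a k else 0))^2 = if k ∈ s then (a k)^2 else 0 := by
      intro k; split <;> simp
    rw [Finset.sum_congr rfl (fun k _ => this k), Finset.sum_ite_mem,
      Finset.inter_eq_right.mpr hsub]
  have hsum_transferE : ∀ (s : Finset ℕ) (m : ℕ), s ⊆ Finset.range m → ∀ (a : ℕ → ℝ)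
      (f : ℕ → E), (∑ i : Fin m, (if (i:ℕ) ∈ s then a i else 0) • f i) = ∑ n ∈ s, a n • f n := by
    intro s m hsub a f
    rw [Fin.sum_univ_eq_sum_range (fun k => (if k ∈ s then a k else 0) • f k) m]
    simp only [ite_smul, zero_smul]
    rw [Finset.sum_ite_mem, Finset.inter_eq_right.mpr hsub]
  have hupS : ∀ (s : Finset ℕ) (a : ℕ → ℝ),
      ‖∑ n ∈ s, a n • x n‖ ≤ M * Real.sqrt (∑ n ∈ s, (a n)^2) := by
    intro s a
    obtain ⟨m, hsub⟩ := s.exists_nat_subset_range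
    have := hup m (fun i => if (i:ℕ) ∈ s then a i else 0)
    rwa [hsum_transferE s m hsub a x, hsq_transfer s m hsub a] at this
  have hlowS : ∀ (s : Finset ℕ) (a : ℕ → ℝ),
      c₁ * Real.sqrt (∑ n ∈ s, (a n)^2) ≤ ‖∑ n ∈ s, a n • T (x n)‖ := by
    intro s a
    obtain ⟨m, hsub⟩ := s.exists_nat_subset_range
    have := hlow m (fun i => if (i:ℕ) ∈ s then a i else 0)
    rwa [hsum_transfer s m hsub a (fun n => T (x n)), hsq_transfer s m hsub a] at this
  constructor
  · refine ⟨id, strictMono_id, c₁, hc₁, ?_⟩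
    intro m a
    rw [← Real.sqrt_eq_rpow]
    exact ⟨hlow m a, hupT m a⟩
  -- second part: the ℓ₂ embedding
  · have hv2 : ∀ v : lp (fun _ : ℕ => ℝ) 2, Summable (fun n => ((v : ℕ → ℝ) n)^2) := by
      intro v
      have h := (lp.memℓp v).summable (by norm_num : 0 < (2:ENNReal).toReal)
      have heq : ∀ n, ‖(v : ℕ → ℝ) n‖ ^ (2:ENNReal).toReal = ((v : ℕ → ℝ) n)^2 := by
        intro n
        rw [ENNReal.toReal_ofNat, show ((2:ℝ)) = ((2:ℕ):ℝ) by norm_num, Real.rpow_natCast]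
        simp [sq_abs]
      exact (summable_congr heq).mp h
    have hnormv : ∀ v : lp (fun _ : ℕ => ℝ) 2,
        ‖v‖ = Real.sqrt (∑' n, ((v : ℕ → ℝ) n)^2) := by
      intro v
      rw [lp.norm_eq_tsum_rpow (by norm_num : 0 < (2:ENNReal).toReal) v]
      have heq : ∀ n, ‖(v : ℕ → ℝ) n‖ ^ (2:ENNReal).toReal = ((v : ℕ → ℝ) n)^2 := by
        intro n
        rw [ENNReal.toReal_ofNat, show ((2:ℝ)) = ((2:ℕ):ℝ) by norm_num, Real.rpow_natCast]
        simp [sq_abs]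
      rw [tsum_congr heq]
      rw [ENNReal.toReal_ofNat, Real.sqrt_eq_rpow]
    have hsummable : ∀ v : lp (fun _ : ℕ => ℝ) 2,
        Summable (fun n => (v : ℕ → ℝ) n • x n) := by
      intro v
      rw [summable_iff_vanishing]
      intro U hU
      obtain ⟨ε, hε, hball⟩ := Metric.mem_nhds_iff.mp hU
      set r : ℝ := (ε / (M + 1))^2 with hrdef
      have hr : 0 < r := by positivity
      obtain ⟨s, hs⟩ := summable_iff_vanishing.mp (hv2 v) (Metric.ball 0 r)
        (Metric.ball_mem_nhds 0 hr)
      refine ⟨s, fun t ht => ?_⟩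
      apply hball
      rw [Metric.mem_ball, dist_zero_right]
      have h1 : ∑ n ∈ t, ((v : ℕ → ℝ) n)^2 < r := by
        have := hs t ht
        rw [Metric.mem_ball, dist_zero_right, Real.norm_eq_abs] at this
        exact lt_of_le_of_lt (le_abs_self _) this
      calc ‖∑ n ∈ t, (v : ℕ → ℝ) n • x n‖ ≤ M * Real.sqrt (∑ n ∈ t, ((v : ℕ → ℝ) n)^2) :=
            hupS t _
        _ < M * (ε / (M + 1)) := by
            apply mul_lt_mul_of_pos_left _ hM
            calc Real.sqrt (∑ n ∈ t, ((v : ℕ → ℝ) n)^2) < Real.sqrt r :=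
                  Real.sqrt_lt_sqrt (Finset.sum_nonneg (fun i _ => sq_nonneg _)) h1
              _ = ε / (M + 1) := by rw [hrdef, Real.sqrt_sq (by positivity)]
        _ < ε := by
            rw [mul_div_assoc']
            rw [div_lt_iff₀ (by positivity : (0:ℝ) < M + 1)]
            nlinarith
    -- the linear map
    set L : lp (fun _ : ℕ => ℝ) 2 →ₗ[ℝ] E :=
      { toFun := fun v => ∑' n, (v : ℕ → ℝ) n • x n
        map_add' := by
          intro u v
          dsimp only
          have : ∀ n, ((u + v : lp (fun _ : ℕ => ℝ) 2) : ℕ → ℝ) n • x n =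
              (u : ℕ → ℝ) n • x n + (v : ℕ → ℝ) n • x n := by
            intro n
            rw [lp.coeFn_add]
            simp [add_smul]
          rw [tsum_congr this, Summable.tsum_add (hsummable u) (hsummable v)]
        map_smul' := by
          intro c v
          dsimp only
          have : ∀ n, ((c • v : lp (fun _ : ℕ => ℝ) 2) : ℕ → ℝ) n • x n =
              c • ((v : ℕ → ℝ) n • x n) := by
            intro n
            rw [lp.coeFn_smul]
            simp [smul_smul]
          rw [tsum_congr this, Summable.tsum_const_smul c (hsummable v)]
          rfl } with hLdef
    have hLbound : ∀ v : lp (fun _ : ℕ => ℝ) 2, ‖L v‖ ≤ M * ‖v‖ := by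
      intro v
      have hhs : HasSum (fun n => (v : ℕ → ℝ) n • x n) (L v) := (hsummable v).hasSum
      have htend := hhs.tendsto_sum_nat
      refine le_of_tendsto htend.norm (Eventually.of_forall (fun n => ?_))
      calc ‖∑ k ∈ Finset.range n, (v : ℕ → ℝ) k • x k‖
          ≤ M * Real.sqrt (∑ k ∈ Finset.range n, ((v : ℕ → ℝ) k)^2) := hupS _ _
        _ ≤ M * ‖v‖ := by
            rw [hnormv v]
            apply mul_le_mul_of_nonneg_left _ hM.le
            apply Real.sqrt_le_sqrt
            exact Summable.sum_le_tsum _ (fun i _ => sq_nonneg _) (hv2 v)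
    set e : lp (fun _ : ℕ => ℝ) 2 →L[ℝ] E := L.mkContinuous M hLbound with hedef
    have heval : ∀ v, e v = ∑' n, (v : ℕ → ℝ) n • x n := fun v => rfl
    -- lower bound for T ∘ e
    have hTe : ∀ v, c₁ * ‖v‖ ≤ ‖T (e v)‖ := by
      intro v
      have hhs : HasSum (fun n => (v : ℕ → ℝ) n • x n) (e v) := (hsummable v).hasSum
      have htendB : Tendsto (fun n => ‖T (∑ k ∈ Finset.range n, (v : ℕ → ℝ) k • x k)‖)
          atTop (nhds ‖T (e v)‖) :=
        ((T.continuous.tendsto _).comp hhs.tendsto_sum_nat).norm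
      have htendA : Tendsto
          (fun n => c₁ * Real.sqrt (∑ k ∈ Finset.range n, ((v : ℕ → ℝ) k)^2))
          atTop (nhds (c₁ * ‖v‖)) := by
        rw [hnormv v]
        exact (((Real.continuous_sqrt.tendsto _).comp
          (hv2 v).hasSum.tendsto_sum_nat)).const_mul c₁
      refine le_of_tendsto_of_tendsto' htendA htendB (fun n => ?_)
      have : T (∑ k ∈ Finset.range n, (v : ℕ → ℝ) k • x k) =
          ∑ k ∈ Finset.range n, (v : ℕ → ℝ) k • T (x k) := by
        rw [map_sum]
        exact Finset.sum_congr rfl (fun k _ => T.map_smul _ _)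
      rw [this]
      exact hlowS _ _
    have hTop : 0 < ‖T‖ := by
      by_contra h
      push_neg at h
      have hT0 : ‖T‖ = 0 := le_antisymm h (norm_nonneg T)
      have := hTx 0
      have h2 : ‖T (x 0)‖ ≤ ‖T‖ * ‖x 0‖ := T.le_opNorm _
      rw [hT0, zero_mul] at h2
      linarith
    refine ⟨e, c₁ / (1 + ‖T‖), by positivity, ?_, ?_⟩
    · intro v
      have h1 := hTe v
      have h2 : ‖T (e v)‖ ≤ ‖T‖ * ‖e v‖ := T.le_opNorm _
      rw [div_mul_eq_mul_div, div_le_iff₀ (by positivity : (0:ℝ) < 1 + ‖T‖)]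
      have h3 : c₁ * ‖v‖ ≤ ‖T‖ * ‖e v‖ := le_trans h1 h2
      calc c₁ * ‖v‖ ≤ ‖T‖ * ‖e v‖ := h3
        _ ≤ (1 + ‖T‖) * ‖e v‖ :=
            mul_le_mul_of_nonneg_right (by linarith) (norm_nonneg _)
        _ = ‖e v‖ * (1 + ‖T‖) := mul_comm _ _
    · intro v
      refine le_trans ?_ (hTe v)
      apply mul_le_mul_of_nonneg_right _ (norm_nonneg v)
      exact div_le_self hc₁.le (by linarith [norm_nonneg T])
end
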